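/- arXiv:2003.02687 — 3 statements merged into one kernel-verified Lean document; each statement's English description precedes it below -/
import Mathlib

section
/- Let G be a finite simple graph of treewidth at most 2, i.e., suppose there exists a chordal graph M on the same vertex set as G with E(G) ⊆ E(M) and clique number ω(M) ≤ 3. (This includes all series-parallel graphs.) Then G is partially DP-nice. -/
open SimpleGraph

/-- `DPCover G H L` means `(L, H)` is a cover of the graph `G`:
(1) the sets `L u` partition `V(H)`; (2) each `H[L u]` is complete;
(3) for each edge `uv` of `G`, the edges of `H` between `L u` and `L v` form a matching;
(4) there are no edges of `H` between lists of distinct non-adjacent vertices. -/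
structure DPCover {V : Type} (G : SimpleGraph V) {W : Type} (H : SimpleGraph W)
    (L : V → Finset W) : Prop where
  partition : ∀ w : W, ∃! v : V, w ∈ L v
  cliques : ∀ v : V, ∀ a ∈ L v, ∀ b ∈ L v, a ≠ b → H.Adj a b
  matching : ∀ ⦃u v : V⦄, G.Adj u v → ∀ a ∈ L u, ∀ b ∈ L v, ∀ b' ∈ L v,
      H.Adj a b → H.Adj a b' → b = b'
  nonadj : ∀ ⦃u v : V⦄, u ≠ v → ¬ G.Adj u v → ∀ a ∈ L u, ∀ b ∈ L v, ¬ H.Adj a b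

/-- A finset is independent in `H` if no two of its elements are adjacent. -/
def IsIndepFinset {W : Type} (H : SimpleGraph W) (S : Finset W) : Prop :=
  ∀ a ∈ S, ∀ b ∈ S, ¬ H.Adj a b

/-- The independence number of `H`. -/
noncomputable def indepNum {W : Type} [Fintype W] (H : SimpleGraph W) : ℕ :=
  sSup {n : ℕ | ∃ S : Finset W, IsIndepFinset H S ∧ S.card = n}

/-- The DP-chromatic number of `G`: the least `m` such that every `m`-fold cover `(L, H)`
of `G` admits an `H`-coloring, i.e. an independent set in `H` of size `|V(G)|`. -/
noncomputable def chiDP {V : Type} [Fintype V] (G : SimpleGraph V) : ℕ :=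
  sInf {m : ℕ | ∀ (W : Type) (_ : Fintype W) (H : SimpleGraph W) (L : V → Finset W),
    DPCover G H L → (∀ v, (L v).card = m) →
    ∃ S : Finset W, IsIndepFinset H S ∧ S.card = Fintype.card V}

/-- The partial DP `t`-chromatic number of `G`: the minimum of the independence number
`α(H)` over all `t`-fold covers `(L, H)` of `G`. -/
noncomputable def alphaDP {V : Type} [Fintype V] (G : SimpleGraph V) (t : ℕ) : ℕ :=
  sInf {n : ℕ | ∃ (W : Type) (_ : Fintype W) (H : SimpleGraph W) (L : V → Finset W),
    DPCover G H L ∧ (∀ v, (L v).card = t) ∧ _root_.indepNum H = n}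

/-- A graph `G` is partially DP-nice if `α_t^{DP}(G) ≥ t|V(G)|/χ_DP(G)` for all
`t ∈ {1, …, χ_DP(G)}`. -/
def PartiallyDPNice {V : Type} [Fintype V] (G : SimpleGraph V) : Prop :=
  ∀ t : ℕ, 1 ≤ t → t ≤ chiDP G →
    (t * Fintype.card V : ℚ) / (chiDP G : ℚ) ≤ (alphaDP G t : ℚ)

/-- A graph is chordal if every cycle of length at least 4 has a chord: an edge of the
graph joining two vertices of the cycle that is not an edge of the cycle. -/
def IsChordalGraph {V : Type} (G : SimpleGraph V) : Prop :=
  ∀ ⦃v : V⦄ (c : G.Walk v v), c.IsCycle → 4 ≤ c.length →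
    ∃ a b : V, a ∈ c.support ∧ b ∈ c.support ∧ G.Adj a b ∧ s(a, b) ∉ c.edges




namespace DPAux

open SimpleGraph.Walk

variable {V : Type} {M : SimpleGraph V}

lemma edges_of_length_one {a b : V} (p : M.Walk a b) (h : p.length = 1) :
    p.edges = [s(a, b)] := by
  cases p with
  | nil => simp at h
  | cons h' q =>
    cases q with
    | nil => simp
    | cons h'' q' => simp [Walk.length_cons] at h

lemma start_edge_decomp {u v x : V} (p : M.Walk u v) (hp : p.IsPath)
    (hx : s(u, x) ∈ p.edges) : ∃ (h : M.Adj u x) (r : M.Walk x v), p = Walk.cons h r := by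
  cases p with
  | nil => simp at hx
  | @cons _ y _ h q =>
    rw [Walk.edges_cons, List.mem_cons] at hx
    rcases hx with hx | hx
    · have hxy : x = y := Sym2.congr_right.mp hx
      subst hxy
      exact ⟨h, q, rfl⟩
    · exfalso
      have : u ∈ q.support := q.fst_mem_support_of_mem_edges hx
      rw [Walk.cons_isPath_iff] at hp
      exact hp.2 this

/-- Splitting a cycle along a chord gives a strictly shorter cycle with support inside
the old one. -/
lemma chord_split {v a b : V} (c : M.Walk v v) (hc : c.IsCycle)
    (ha : a ∈ c.support) (hb : b ∈ c.support) (hab : M.Adj a b)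
    (hch : s(a, b) ∉ c.edges) :
    ∃ (w : V) (c' : M.Walk w w), c'.IsCycle ∧ c'.length < c.length ∧
      (∀ z ∈ c'.support, z ∈ c.support) := by
  classical
  set c1 := c.rotate a ha with hc1def
  have hc1cyc : c1.IsCycle := hc.rotate ha
  have hc1edges : ∀ e, e ∈ c1.edges ↔ e ∈ c.edges := fun e => (c.rotate_edges a ha).mem_iff
  have hc1supp : ∀ z, z ∈ c1.support → z ∈ c.support := by
    intro z hz
    rw [hc1def, Walk.rotate, Walk.mem_support_append_iff] at hz
    rcases hz with hz | hz
    · exact c.support_dropUntil_subset ha hz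
    · exact c.support_takeUntil_subset ha hz
  have hbc1 : b ∈ c1.support := by
    rw [hc1def, Walk.rotate, Walk.mem_support_append_iff]
    rw [← c.take_spec ha, Walk.mem_support_append_iff] at hb
    tauto
  have hlen : c1.length = c.length := by
    rw [hc1def, Walk.rotate, Walk.length_append]
    conv_rhs => rw [← c.take_spec ha, Walk.length_append]
    omega
  -- decompose c1 = cons h p
  cases hq : c1 with
  | nil => exact absurd (hq ▸ hc1cyc) (Walk.IsCycle.not_of_nil)
  | @cons _ a2 _ h p =>
    have hpPath : p.IsPath ∧ s(a, a2) ∉ p.edges := (Walk.cons_isCycle_iff p h).mp (hq ▸ hc1cyc)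
    have hbp : b ∈ p.support := by
      have := hq ▸ hbc1
      rw [Walk.support_cons, List.mem_cons] at this
      rcases this with rfl | h'
      · exact absurd rfl (M.ne_of_adj hab)
      · exact h'
    -- new cycle: cons hab (p.dropUntil b hbp) : Walk a a
    refine ⟨a, Walk.cons hab (p.dropUntil b hbp), ?_, ?_, ?_⟩
    · rw [Walk.cons_isCycle_iff]
      refine ⟨hpPath.1.dropUntil hbp, fun hmem => ?_⟩
      have : s(a, b) ∈ c1.edges := by
        rw [hq, Walk.edges_cons]
        exact List.mem_cons_of_mem _ (p.edges_dropUntil_subset hbp hmem)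
      exact hch ((hc1edges _).mp this)
    · have h1 : (p.takeUntil b hbp).length + (p.dropUntil b hbp).length = p.length := by
        conv_rhs => rw [← p.take_spec hbp, Walk.length_append]
      have h2 : c.length = p.length + 1 := by
        rw [← hlen, hq]; simp [Walk.length_cons]
      have h3 : (p.takeUntil b hbp).length ≠ 0 := by
        intro h0
        have : a2 = b := by
          have := congrArg (Walk.getVert (p.takeUntil b hbp)) (rfl : (0:ℕ) = 0)
          -- takeUntil from a2 to b with length 0 means a2 = b
          have hnil : (p.takeUntil b hbp).Nil := Walk.nil_iff_length_eq.mpr h0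
          exact hnil.eq
        subst this
        -- then edge s(a, b) is the first edge of c1
        apply hch
        apply (hc1edges _).mp
        rw [hq, Walk.edges_cons]
        exact List.mem_cons_self
      simp only [Walk.length_cons]
      omega
    · intro z hz
      rw [Walk.support_cons, List.mem_cons] at hz
      rcases hz with rfl | hz
      · exact ha
      · apply hc1supp
        rw [hq, Walk.support_cons]
        exact List.mem_cons_of_mem _ (p.support_dropUntil_subset hbp hz)


lemma edges_of_length_one' {a b : V} (p : M.Walk a b) (h : p.length = 1) :
    p.edges = [s(a, b)] := by
  cases p with
  | nil => simp at h
  | cons h' q =>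
    cases q with
    | nil => simp
    | cons h'' q' => simp [Walk.length_cons] at h

/-- Shortcut a walk along a chord. -/
lemma shortcut {u v a b : V} (p : M.Walk u v) (ha : a ∈ p.support) (hb : b ∈ p.support)
    (hab : M.Adj a b) (hch : s(a, b) ∉ p.edges) :
    ∃ q : M.Walk u v, q.length < p.length ∧ ∀ z ∈ q.support, z ∈ p.support := by
  obtain ⟨q, r, rfl⟩ := Walk.mem_support_iff_exists_append.mp ha
  by_cases hbr : b ∈ r.support
  · obtain ⟨r1, r2, rfl⟩ := Walk.mem_support_iff_exists_append.mp hbr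
    have hr1 : 2 ≤ r1.length := by
      rcases Nat.lt_or_ge r1.length 2 with h' | h'
      · interval_cases h : r1.length
        · exact absurd (Walk.nil_iff_length_eq.mpr h).eq (M.ne_of_adj hab)
        · exfalso; apply hch
          rw [Walk.edges_append, Walk.edges_append]
          have := edges_of_length_one' r1 h
          simp [this]
      · exact h'
    refine ⟨q.append (Walk.cons hab r2), ?_, ?_⟩
    · simp only [Walk.length_append, Walk.length_cons]
      omega
    · intro z hz
      rw [Walk.mem_support_append_iff] at hz ⊢
      rcases hz with hz | hz
      · exact Or.inl hz
      · rw [Walk.support_cons, List.mem_cons] at hz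
        rcases hz with rfl | hz
        · exact Or.inr (by rw [Walk.mem_support_append_iff]; exact Or.inl r1.start_mem_support)
        · exact Or.inr (by rw [Walk.mem_support_append_iff]; exact Or.inr hz)
  · have hbq : b ∈ q.support := by
      rw [Walk.mem_support_append_iff] at hb
      tauto
    obtain ⟨q1, q2, rfl⟩ := Walk.mem_support_iff_exists_append.mp hbq
    have hq2 : 2 ≤ q2.length := by
      rcases Nat.lt_or_ge q2.length 2 with h' | h'
      · interval_cases h : q2.length
        · exact absurd (Walk.nil_iff_length_eq.mpr h).eq (M.ne_of_adj hab.symm)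
        · exfalso; apply hch
          rw [Walk.edges_append, Walk.edges_append]
          have := edges_of_length_one' q2 h
          simp [this, Sym2.eq_swap]
      · exact h'
    refine ⟨q1.append (Walk.cons hab.symm r), ?_, ?_⟩
    · simp only [Walk.length_append, Walk.length_cons]
      omega
    · intro z hz
      rw [Walk.mem_support_append_iff] at hz
      rw [Walk.mem_support_append_iff]
      rcases hz with hz | hz
      · exact Or.inl (by rw [Walk.mem_support_append_iff]; exact Or.inl hz)
      · rw [Walk.support_cons, List.mem_cons] at hz
        rcases hz with rfl | hz
        · exact Or.inl (by rw [Walk.mem_support_append_iff]; exact Or.inr q2.start_mem_support)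
        · exact Or.inr hz

lemma triangle_of_cycle_length_three {w : V} (c : M.Walk w w) (h3 : c.length = 3) :
    ∃ x y, M.Adj w x ∧ M.Adj x y ∧ M.Adj y w ∧ x ∈ c.support ∧ y ∈ c.support := by
  refine ⟨c.getVert 1, c.getVert 2, ?_, ?_, ?_, ?_, ?_⟩
  · have := c.adj_getVert_succ (by omega : 0 < c.length)
    simpa [Walk.getVert_zero] using this
  · exact c.adj_getVert_succ (by omega)
  · have := c.adj_getVert_succ (by omega : 2 < c.length)
    have h := c.getVert_length
    rw [h3] at h
    rwa [show (2:ℕ)+1 = 3 by rfl, h] at this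
  · exact Walk.mem_support_iff_exists_getVert.mpr ⟨1, rfl, by omega⟩
  · exact Walk.mem_support_iff_exists_getVert.mpr ⟨2, rfl, by omega⟩

/-- A graph with all degrees at least 2 inside `B` contains a cycle inside `B`. -/
lemma exists_cycle_of_min_degree_two [Fintype V] (B : Finset V)
    (hdeg : ∀ v ∈ B, ∃ u1 u2, u1 ∈ B ∧ u2 ∈ B ∧ u1 ≠ u2 ∧ M.Adj v u1 ∧ M.Adj v u2)
    (hne : B.Nonempty) :
    ∃ (w : V) (c : M.Walk w w), c.IsCycle ∧ ∀ z ∈ c.support, z ∈ B := by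
  classical
  obtain ⟨x0, hx0⟩ := hne
  suffices h : ∀ (N : ℕ) (x w : V) (p : M.Walk x w), p.IsPath → (∀ z ∈ p.support, z ∈ B) →
      B.card ≤ p.length + N →
      ∃ (w' : V) (c : M.Walk w' w'), c.IsCycle ∧ ∀ z ∈ c.support, z ∈ B by
    exact h B.card x0 x0 Walk.nil Walk.IsPath.nil (by simp [hx0]) (by simp)
  intro N
  induction N with
  | zero =>
    intro x w p hp hsub hcard
    exfalso
    have h1 : p.support.length = p.length + 1 := p.length_support
    have h2 : p.support.toFinset.card = p.support.length :=
      List.toFinset_card_of_nodup hp.support_nodup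
    have h3 : p.support.toFinset ⊆ B := fun z hz => hsub z (List.mem_toFinset.mp hz)
    have := Finset.card_le_card h3
    omega
  | succ N ih =>
    intro x w p hp hsub hcard
    have hx : x ∈ B := hsub x p.start_mem_support
    obtain ⟨u1, u2, hu1, hu2, hne12, ha1, ha2⟩ := hdeg x hx
    have hu : ∃ u, u ∈ B ∧ M.Adj x u ∧ u ≠ p.getVert 1 := by
      by_cases h1 : u1 = p.getVert 1
      · exact ⟨u2, hu2, ha2, by rw [← h1]; exact hne12.symm⟩
      · exact ⟨u1, hu1, ha1, h1⟩
    obtain ⟨u, huB, hxu, hune⟩ := hu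
    by_cases hus : u ∈ p.support
    · refine ⟨x, Walk.cons hxu (p.takeUntil u hus).reverse, ?_, ?_⟩
      · rw [Walk.cons_isCycle_iff]
        refine ⟨(hp.takeUntil hus).reverse, fun hmem => ?_⟩
        rw [Walk.edges_reverse, List.mem_reverse] at hmem
        have hmem' : s(x, u) ∈ p.edges := p.edges_takeUntil_subset hus hmem
        obtain ⟨h', r, hr⟩ := start_edge_decomp p hp hmem'
        apply hune
        rw [hr, Walk.getVert_cons_succ, Walk.getVert_zero]
      · intro z hz
        rw [Walk.support_cons, List.mem_cons] at hz
        rcases hz with rfl | hz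
        · exact hx
        · rw [Walk.support_reverse, List.mem_reverse] at hz
          exact hsub z (p.support_takeUntil_subset hus hz)
    · have hp' : (Walk.cons hxu.symm p).IsPath := hp.cons hus
      apply ih u w (Walk.cons hxu.symm p) hp'
      · intro z hz
        rw [Walk.support_cons, List.mem_cons] at hz
        rcases hz with rfl | hz
        · exact huB
        · exact hsub z hz
      · rw [Walk.length_cons]; omega


/-- Connectivity within a vertex subset. -/
def ConnIn (M : SimpleGraph V) (A : Finset V) (x y : V) : Prop :=
  ∃ p : M.Walk x y, ∀ z ∈ p.support, z ∈ A

lemma ConnIn.refl {A : Finset V} {x : V} (hx : x ∈ A) : ConnIn M A x x :=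
  ⟨Walk.nil, by simp [hx]⟩

lemma ConnIn.symm {A : Finset V} {x y : V} (h : ConnIn M A x y) : ConnIn M A y x := by
  obtain ⟨p, hp⟩ := h
  exact ⟨p.reverse, fun z hz => hp z (by rwa [Walk.support_reverse, List.mem_reverse] at hz)⟩

lemma ConnIn.trans {A : Finset V} {x y z : V} (h1 : ConnIn M A x y) (h2 : ConnIn M A y z) :
    ConnIn M A x z := by
  obtain ⟨p, hp⟩ := h1; obtain ⟨q, hq⟩ := h2
  refine ⟨p.append q, fun w hw => ?_⟩
  rw [Walk.mem_support_append_iff] at hw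
  rcases hw with hw | hw
  · exact hp w hw
  · exact hq w hw

lemma ConnIn.extend {A : Finset V} {x y z : V} (h : ConnIn M A x y) (hyz : M.Adj y z)
    (hz : z ∈ A) : ConnIn M A x z := by
  refine h.trans ⟨Walk.cons hyz Walk.nil, ?_⟩
  intro w hw
  simp only [Walk.support_cons, Walk.support_nil, List.mem_cons, List.mem_singleton] at hw
  rcases hw with rfl | rfl | h'
  · obtain ⟨p, hp⟩ := h
    exact hp w p.end_mem_support
  · exact hz
  · exact absurd h' (by simp)

lemma ConnIn.of_support {A : Finset V} {x y : V} (p : M.Walk x y)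
    (hp : ∀ z ∈ p.support, z ∈ A) {z : V} (hz : z ∈ p.support) : ConnIn M A x z := by
  classical
  exact ⟨p.takeUntil z hz, fun w hw => hp w (p.support_takeUntil_subset hz hw)⟩

/-- A path between distinct non-adjacent vertices has length at least 2. -/
lemma two_le_length_of_not_adj {u v : V} (p : M.Walk u v) (huv : u ≠ v)
    (hn : ¬ M.Adj u v) : 2 ≤ p.length := by
  rcases Nat.lt_or_ge p.length 2 with h | h
  · interval_cases h' : p.length
    · exact absurd (Walk.nil_iff_length_eq.mpr h').eq huv
    · exact absurd (p.adj_of_mem_edges (by rw [edges_of_length_one' p h']; simp)) hn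
  · exact h

/-- Gluing two internally disjoint paths between non-adjacent vertices gives a cycle. -/
lemma cycle_of_two_paths {u v : V} (p q : M.Walk u v) (hp : p.IsPath) (hq : q.IsPath)
    (huv : u ≠ v) (hnadj : ¬ M.Adj u v)
    (hdisj : ∀ z, z ∈ p.support → z ∈ q.support → z = u ∨ z = v) :
    (p.append q.reverse).IsCycle := by
  have hedge : ∀ e, e ∈ p.edges → e ∈ q.edges → False := by
    intro e he1 he2
    induction e with
    | h c d =>
      have hc : c = u ∨ c = v := hdisj c (p.fst_mem_support_of_mem_edges he1)
        (q.fst_mem_support_of_mem_edges he2)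
      have hd : d = u ∨ d = v := hdisj d (p.snd_mem_support_of_mem_edges he1)
        (q.snd_mem_support_of_mem_edges he2)
      have hcd : c ≠ d := (p.adj_of_mem_edges he1).ne
      have : M.Adj u v := by
        rcases hc with rfl | rfl <;> rcases hd with rfl | rfl
        · exact absurd rfl hcd
        · exact p.adj_of_mem_edges he1
        · exact (p.adj_of_mem_edges he1).symm
        · exact absurd rfl hcd
      exact hnadj this
  constructor
  · constructor
    · constructor
      rw [Walk.edges_append, List.nodup_append']
      refine ⟨hp.isTrail.edges_nodup, (hq.reverse).isTrail.edges_nodup, ?_⟩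
      intro e he1 he2
      rw [Walk.edges_reverse, List.mem_reverse] at he2
      exact hedge e he1 he2
    · intro hns
      have := congrArg Walk.length hns
      rw [Walk.length_append, Walk.length_reverse] at this
      have h2 := two_le_length_of_not_adj p huv hnadj
      simp only [Walk.length_nil] at this
      omega
  · rw [Walk.support_append, p.support_eq_cons, List.cons_append, List.tail_cons,
      List.nodup_append']
    have hpt : p.support.tail.Nodup := by
      have := hp.support_nodup
      rw [p.support_eq_cons, List.nodup_cons] at this
      exact this.2
    have hqrev : q.reverse.support.Nodup := hq.reverse.support_nodup
    have hqt : q.reverse.support.tail.Nodup := by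
      rw [q.reverse.support_eq_cons, List.nodup_cons] at hqrev
      exact hqrev.2
    refine ⟨hpt, hqt, ?_⟩
    intro z hz1 hz2
    have hzp : z ∈ p.support := by
      rw [p.support_eq_cons]; exact List.mem_cons_of_mem _ hz1
    have hzq : z ∈ q.support := by
      have : z ∈ q.reverse.support := by
        rw [q.reverse.support_eq_cons]; exact List.mem_cons_of_mem _ hz2
      rwa [Walk.support_reverse, List.mem_reverse] at this
    rcases hdisj z hzp hzq with rfl | rfl
    · have := hp.support_nodup
      rw [p.support_eq_cons, List.nodup_cons] at this
      exact this.1 hz1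
    · have := hq.reverse.support_nodup
      rw [q.reverse.support_eq_cons, List.nodup_cons] at this
      exact this.1 hz2


/-- `v` is simplicial within `A`. -/
def SimplIn (M : SimpleGraph V) (A : Finset V) (v : V) : Prop :=
  ∀ x ∈ A, ∀ y ∈ A, M.Adj v x → M.Adj v y → x ≠ y → M.Adj x y

lemma dirac [Fintype V] (hM : IsChordalGraph M) :
    ∀ (n : ℕ) (A : Finset V), A.card ≤ n → A.Nonempty →
    (∀ x ∈ A, ∀ y ∈ A, x ≠ y → M.Adj x y) ∨
    (∃ v ∈ A, ∃ w ∈ A, v ≠ w ∧ ¬ M.Adj v w ∧ SimplIn M A v ∧ SimplIn M A w) := by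
  classical
  intro n
  induction n with
  | zero =>
    intro A hA hne
    exact absurd (Finset.card_pos.mpr hne) (by omega)
  | succ n ih =>
    intro A hA hne
    by_cases hcl : ∀ x ∈ A, ∀ y ∈ A, x ≠ y → M.Adj x y
    · exact Or.inl hcl
    right
    push_neg at hcl
    obtain ⟨x0, hx0A, y0, hy0A, hxy0, hnadj0⟩ := hcl
    set P : Finset V → Prop := fun S => S ⊆ A ∧ x0 ∉ S ∧ y0 ∉ S ∧ ¬ ConnIn M (A \ S) x0 y0
      with hPdef
    have hP0 : P (A \ {x0, y0}) := by
      refine ⟨Finset.sdiff_subset, by simp, by simp, ?_⟩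
      rintro ⟨p, hsup⟩
      have hD : ∀ z ∈ A \ (A \ {x0, y0}), z = x0 ∨ z = y0 := by
        intro z hz
        rw [Finset.mem_sdiff, Finset.mem_sdiff] at hz
        have := hz.2
        push_neg at this
        simpa using this hz.1
      have hpn : ¬ p.Nil := Walk.not_nil_of_ne hxy0
      obtain ⟨z, hadj, q, rfl⟩ := Walk.not_nil_iff.mp hpn
      have hz2 : z = x0 ∨ z = y0 := hD z (hsup z (by simp))
      rcases hz2 with rfl | rfl
      · exact M.loopless.irrefl _ hadj
      · exact hnadj0 hadj
    have hSetne : (Finset.univ.filter P).Nonempty :=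
      ⟨A \ {x0, y0}, Finset.mem_filter.mpr ⟨Finset.mem_univ _, hP0⟩⟩
    obtain ⟨S, hSmem, hSmin⟩ := Finset.exists_min_image (Finset.univ.filter P)
      Finset.card hSetne
    obtain ⟨hSsub, hSx0, hSy0, hSsep⟩ := (Finset.mem_filter.mp hSmem).2
    set X := (A \ S).filter (fun v => ConnIn M (A \ S) x0 v) with hXdef
    set Y := (A \ S).filter (fun v => ConnIn M (A \ S) y0 v) with hYdef
    have hXmem : ∀ z, z ∈ X ↔ z ∈ A \ S ∧ ConnIn M (A \ S) x0 z := fun z => by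
      rw [hXdef, Finset.mem_filter]
    have hYmem : ∀ z, z ∈ Y ↔ z ∈ A \ S ∧ ConnIn M (A \ S) y0 z := fun z => by
      rw [hYdef, Finset.mem_filter]
    have hx0AS : x0 ∈ A \ S := Finset.mem_sdiff.mpr ⟨hx0A, hSx0⟩
    have hy0AS : y0 ∈ A \ S := Finset.mem_sdiff.mpr ⟨hy0A, hSy0⟩
    have hx0X : x0 ∈ X := (hXmem x0).mpr ⟨hx0AS, ConnIn.refl hx0AS⟩
    have hy0Y : y0 ∈ Y := (hYmem y0).mpr ⟨hy0AS, ConnIn.refl hy0AS⟩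
    have hXsub : X ⊆ A \ S := Finset.filter_subset _ _
    have hYsub : Y ⊆ A \ S := Finset.filter_subset _ _
    have hXY : ∀ z, z ∈ X → z ∈ Y → False := by
      intro z hzX hzY
      exact hSsep ((((hXmem z).mp hzX).2).trans (((hYmem z).mp hzY).2).symm)
    have hXclosed : ∀ a ∈ X, ∀ z ∈ A \ S, M.Adj a z → z ∈ X := by
      intro a haX z hz hadj
      exact (hXmem z).mpr ⟨hz, (((hXmem a).mp haX).2).extend hadj hz⟩
    have hYclosed : ∀ a ∈ Y, ∀ z ∈ A \ S, M.Adj a z → z ∈ Y := by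
      intro a haY z hz hadj
      exact (hYmem z).mpr ⟨hz, (((hYmem a).mp haY).2).extend hadj hz⟩
    have hcross : ∀ a ∈ X, ∀ b ∈ Y, ¬ M.Adj a b := by
      intro a haX b hbY hadj
      exact hXY b (hXclosed a haX b (hYsub hbY) hadj) hbY
    -- every separator vertex has a neighbour in each component
    have side : ∀ s ∈ S, ∀ (c d : V) (p : M.Walk c d), c ∉ S →
        (∀ z ∈ p.support, z ∈ A \ (S.erase s)) → s ∈ p.support →
        ∃ z, M.Adj s z ∧ z ∈ A \ S ∧ ConnIn M (A \ S) c z := by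
      intro s hs c d p hcS hpsup hsp
      set q := p.takeUntil s hsp with hqdef
      have hq1 : q.support.count s = 1 := p.count_support_takeUntil_eq_one hsp
      have hscne : s ≠ c := fun h => hcS (h ▸ hs)
      have hqn : ¬ q.reverse.Nil := Walk.not_nil_of_ne hscne
      obtain ⟨z, hsz, r, hqr⟩ := Walk.not_nil_iff.mp hqn
      have hcount : q.reverse.support.count s = 1 := by
        rw [Walk.support_reverse, List.count_reverse]; exact hq1
      have hrs : s ∉ r.support := by
        intro hmem
        rw [hqr, Walk.support_cons, List.count_cons_self] at hcount
        have := List.count_pos_iff.mpr hmem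
        omega
      have hrsub : ∀ w ∈ r.support, w ∈ A \ S := by
        intro w hw
        have hw' : w ∈ q.reverse.support := by
          rw [hqr, Walk.support_cons]; exact List.mem_cons_of_mem _ hw
        rw [Walk.support_reverse, List.mem_reverse] at hw'
        have hw2 : w ∈ A \ (S.erase s) := hpsup w (p.support_takeUntil_subset hsp hw')
        rw [Finset.mem_sdiff] at hw2 ⊢
        refine ⟨hw2.1, fun hwS => ?_⟩
        exact hw2.2 (Finset.mem_erase.mpr ⟨fun h => hrs (h ▸ hw), hwS⟩)
      exact ⟨z, hsz, hrsub z r.start_mem_support, (ConnIn.symm ⟨r, hrsub⟩)⟩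
    have hnbr : ∀ s ∈ S, (∃ z ∈ X, M.Adj s z) ∧ (∃ z ∈ Y, M.Adj s z) := by
      intro s hs
      have hcard : (S.erase s).card < S.card := Finset.card_erase_lt_of_mem hs
      have hPe : ¬ P (S.erase s) := by
        intro hPe
        have := hSmin _ (Finset.mem_filter.mpr ⟨Finset.mem_univ _, hPe⟩)
        omega
      have hconn : ConnIn M (A \ (S.erase s)) x0 y0 := by
        by_contra hc
        exact hPe ⟨(Finset.erase_subset _ _).trans hSsub,
          fun h => hSx0 (Finset.mem_of_mem_erase h),
          fun h => hSy0 (Finset.mem_of_mem_erase h), hc⟩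
      obtain ⟨p, hpsup⟩ := hconn
      have hsp : s ∈ p.support := by
        by_contra hns
        refine hSsep ⟨p, fun z hz => ?_⟩
        have hz2 := hpsup z hz
        rw [Finset.mem_sdiff] at hz2 ⊢
        exact ⟨hz2.1, fun hzS => hz2.2 (Finset.mem_erase.mpr ⟨fun h => hns (h ▸ hz), hzS⟩)⟩
      constructor
      · obtain ⟨z, hsz, hzAS, hzconn⟩ := side s hs x0 y0 p hSx0 hpsup hsp
        exact ⟨z, (hXmem z).mpr ⟨hzAS, hzconn⟩, hsz⟩
      · have hsp' : s ∈ p.reverse.support := by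
          rwa [Walk.support_reverse, List.mem_reverse]
        obtain ⟨z, hsz, hzAS, hzconn⟩ := side s hs y0 x0 p.reverse hSy0
          (fun z hz => hpsup z (by rwa [Walk.support_reverse, List.mem_reverse] at hz)) hsp'
        exact ⟨z, (hYmem z).mpr ⟨hzAS, hzconn⟩, hsz⟩
    -- the separator is a clique
    have hSclique : ∀ u ∈ S, ∀ v ∈ S, u ≠ v → M.Adj u v := by
      intro u hu v hv huv
      by_contra hnadj
      have huX : u ∉ X := fun h => (Finset.mem_sdiff.mp (hXsub h)).2 hu
      have huY : u ∉ Y := fun h => (Finset.mem_sdiff.mp (hYsub h)).2 hu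
      have hvX : v ∉ X := fun h => (Finset.mem_sdiff.mp (hXsub h)).2 hv
      have hvY : v ∉ Y := fun h => (Finset.mem_sdiff.mp (hYsub h)).2 hv
      obtain ⟨⟨zu, hzuX, hzua⟩, ⟨wu, hwuY, hwua⟩⟩ := hnbr u hu
      obtain ⟨⟨zv, hzvX, hzva⟩, ⟨wv, hwvY, hwva⟩⟩ := hnbr v hv
      have hPX : ∃ p : M.Walk u v, ∀ z ∈ p.support, z ∈ X ∨ z = u ∨ z = v := by
        obtain ⟨p1, hp1⟩ := ((hXmem zu).mp hzuX).2
        obtain ⟨p2, hp2⟩ := ((hXmem zv).mp hzvX).2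
        refine ⟨Walk.cons hzua ((p1.reverse.append p2).append (Walk.cons hzva.symm Walk.nil)),
          ?_⟩
        intro z hz
        rw [Walk.support_cons, List.mem_cons] at hz
        rcases hz with rfl | hz
        · exact Or.inr (Or.inl rfl)
        rw [Walk.mem_support_append_iff] at hz
        rcases hz with hz | hz
        · rw [Walk.mem_support_append_iff] at hz
          left
          rcases hz with hz | hz
          · rw [Walk.support_reverse, List.mem_reverse] at hz
            exact (hXmem z).mpr ⟨hp1 z hz, ConnIn.of_support p1 hp1 hz⟩
          · exact (hXmem z).mpr ⟨hp2 z hz, ConnIn.of_support p2 hp2 hz⟩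
        · rw [Walk.support_cons, List.mem_cons] at hz
          rcases hz with rfl | hz
          · exact Or.inl hzvX
          · simp only [Walk.support_nil, List.mem_singleton] at hz
            exact Or.inr (Or.inr hz)
      have hPY : ∃ p : M.Walk u v, ∀ z ∈ p.support, z ∈ Y ∨ z = u ∨ z = v := by
        obtain ⟨p1, hp1⟩ := ((hYmem wu).mp hwuY).2
        obtain ⟨p2, hp2⟩ := ((hYmem wv).mp hwvY).2
        refine ⟨Walk.cons hwua ((p1.reverse.append p2).append (Walk.cons hwva.symm Walk.nil)),
          ?_⟩
        intro z hz
        rw [Walk.support_cons, List.mem_cons] at hz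
        rcases hz with rfl | hz
        · exact Or.inr (Or.inl rfl)
        rw [Walk.mem_support_append_iff] at hz
        rcases hz with hz | hz
        · rw [Walk.mem_support_append_iff] at hz
          left
          rcases hz with hz | hz
          · rw [Walk.support_reverse, List.mem_reverse] at hz
            exact (hYmem z).mpr ⟨hp1 z hz, ConnIn.of_support p1 hp1 hz⟩
          · exact (hYmem z).mpr ⟨hp2 z hz, ConnIn.of_support p2 hp2 hz⟩
        · rw [Walk.support_cons, List.mem_cons] at hz
          rcases hz with rfl | hz
          · exact Or.inl hwvY
          · simp only [Walk.support_nil, List.mem_singleton] at hz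
            exact Or.inr (Or.inr hz)
      set LX : Set ℕ :=
        {m | ∃ p : M.Walk u v, p.length = m ∧ ∀ z ∈ p.support, z ∈ X ∨ z = u ∨ z = v}
        with hLXdef
      set LY : Set ℕ :=
        {m | ∃ p : M.Walk u v, p.length = m ∧ ∀ z ∈ p.support, z ∈ Y ∨ z = u ∨ z = v}
        with hLYdef
      have hLXne : LX.Nonempty := by obtain ⟨p, hp⟩ := hPX; exact ⟨p.length, p, rfl, hp⟩
      have hLYne : LY.Nonempty := by obtain ⟨p, hp⟩ := hPY; exact ⟨p.length, p, rfl, hp⟩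
      obtain ⟨pX0, hpX0len, hpX0sup⟩ := Nat.sInf_mem hLXne
      obtain ⟨pY0, hpY0len, hpY0sup⟩ := Nat.sInf_mem hLYne
      set QX := pX0.bypass with hQXdef
      set QY := pY0.bypass with hQYdef
      have hQXsup : ∀ z ∈ QX.support, z ∈ X ∨ z = u ∨ z = v :=
        fun z hz => hpX0sup z (pX0.support_bypass_subset hz)
      have hQYsup : ∀ z ∈ QY.support, z ∈ Y ∨ z = u ∨ z = v :=
        fun z hz => hpY0sup z (pY0.support_bypass_subset hz)
      have hQXlen : QX.length = sInf LX :=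
        le_antisymm (hpX0len ▸ pX0.length_bypass_le) (Nat.sInf_le ⟨QX, rfl, hQXsup⟩)
      have hQYlen : QY.length = sInf LY :=
        le_antisymm (hpY0len ▸ pY0.length_bypass_le) (Nat.sInf_le ⟨QY, rfl, hQYsup⟩)
      have hdisj : ∀ z, z ∈ QX.support → z ∈ QY.support → z = u ∨ z = v := by
        intro z hz1 hz2
        rcases hQXsup z hz1 with hzX | h | h
        · rcases hQYsup z hz2 with hzY | h | h
          · exact absurd hzY (fun hzY => hXY z hzX hzY)
          · exact Or.inl h
          · exact Or.inr h
        · exact Or.inl h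
        · exact Or.inr h
      have hC : (QX.append QY.reverse).IsCycle :=
        cycle_of_two_paths QX QY pX0.bypass_isPath pY0.bypass_isPath huv hnadj hdisj
      have hX2 : 2 ≤ QX.length := two_le_length_of_not_adj QX huv hnadj
      have hY2 : 2 ≤ QY.length := two_le_length_of_not_adj QY huv hnadj
      have hClen : 4 ≤ (QX.append QY.reverse).length := by
        rw [Walk.length_append, Walk.length_reverse]; omega
      obtain ⟨a, b, haC, hbC, hab, hch⟩ := hM _ hC hClen
      have hsupC : ∀ z ∈ (QX.append QY.reverse).support,
          z ∈ QX.support ∨ z ∈ QY.support := by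
        intro z hz
        rw [Walk.mem_support_append_iff] at hz
        rcases hz with hz | hz
        · exact Or.inl hz
        · rw [Walk.support_reverse, List.mem_reverse] at hz
          exact Or.inr hz
      have hchX : s(a, b) ∉ QX.edges := by
        intro h
        exact hch (by rw [Walk.edges_append]; exact List.mem_append.mpr (Or.inl h))
      have hchY : s(a, b) ∉ QY.edges := by
        intro h
        refine hch ?_
        rw [Walk.edges_append]
        refine List.mem_append.mpr (Or.inr ?_)
        rw [Walk.edges_reverse, List.mem_reverse]
        exact h
      have hshortX : a ∈ QX.support → b ∈ QX.support → False := by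
        intro ha hb
        obtain ⟨q', hql, hqs⟩ := shortcut QX ha hb hab hchX
        have hmem : q'.length ∈ LX := ⟨q', rfl, fun z hz => hQXsup z (hqs z hz)⟩
        have := Nat.sInf_le hmem
        omega
      have hshortY : a ∈ QY.support → b ∈ QY.support → False := by
        intro ha hb
        obtain ⟨q', hql, hqs⟩ := shortcut QY ha hb hab hchY
        have hmem : q'.length ∈ LY := ⟨q', rfl, fun z hz => hQYsup z (hqs z hz)⟩
        have := Nat.sInf_le hmem
        omega
      have hgetX : ∀ z, z ∈ QX.support → z ∉ QY.support → z ∈ X := by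
        intro z hz1 hz2
        rcases hQXsup z hz1 with h | rfl | rfl
        · exact h
        · exact absurd QY.start_mem_support hz2
        · exact absurd QY.end_mem_support hz2
      have hgetY : ∀ z, z ∈ QY.support → z ∉ QX.support → z ∈ Y := by
        intro z hz1 hz2
        rcases hQYsup z hz1 with h | rfl | rfl
        · exact h
        · exact absurd QX.start_mem_support hz2
        · exact absurd QX.end_mem_support hz2
      rcases hsupC a haC with haX | haY
      · by_cases hbX : b ∈ QX.support
        · exact hshortX haX hbX
        · have hbY : b ∈ QY.support := (hsupC b hbC).resolve_left hbX
          by_cases haY : a ∈ QY.support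
          · exact hshortY haY hbY
          · exact hcross a (hgetX a haX haY) b (hgetY b hbY hbX) hab
      · by_cases hbY : b ∈ QY.support
        · exact hshortY haY hbY
        · have hbX : b ∈ QX.support := (hsupC b hbC).resolve_right hbY
          by_cases haX : a ∈ QX.support
          · exact hshortX haX hbX
          · exact hcross b (hgetX b hbX hbY) a (hgetY a haY haX) hab.symm
    -- produce a simplicial vertex inside a component
    have hcompstep : ∀ (Z : Finset V), Z.Nonempty → Z ⊆ A \ S →
        (∀ a ∈ Z, ∀ z ∈ A \ S, M.Adj a z → z ∈ Z) → (A \ (Z ∪ S)).Nonempty →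
        ∃ p ∈ Z, SimplIn M A p := by
      intro Z hZne hZsub hZcl hrest
      have hZS : Z ∪ S ⊆ A :=
        Finset.union_subset (hZsub.trans Finset.sdiff_subset) hSsub
      have hcard : (Z ∪ S).card ≤ n := by
        obtain ⟨r, hr⟩ := hrest
        rw [Finset.mem_sdiff] at hr
        have hss : Z ∪ S ⊂ A := (Finset.ssubset_iff_of_subset hZS).mpr ⟨r, hr.1, hr.2⟩
        have := Finset.card_lt_card hss
        omega
      have hclosure : ∀ p ∈ Z, ∀ z ∈ A, M.Adj p z → z ∈ Z ∪ S := by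
        intro p hp z hz hadj
        by_cases hzS : z ∈ S
        · exact Finset.mem_union_right _ hzS
        · exact Finset.mem_union_left _ (hZcl p hp z (Finset.mem_sdiff.mpr ⟨hz, hzS⟩) hadj)
      have htrans : ∀ p ∈ Z, SimplIn M (Z ∪ S) p → SimplIn M A p := by
        intro p hp hsimp x hx y hy hpx hpy hxy
        exact hsimp x (hclosure p hp x hx hpx) y (hclosure p hp y hy hpy) hpx hpy hxy
      obtain ⟨c, hcZ⟩ := hZne
      rcases ih (Z ∪ S) hcard ⟨c, Finset.mem_union_left _ hcZ⟩ with hcl2 | hpair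
      · refine ⟨c, hcZ, htrans c hcZ ?_⟩
        intro x hx y hy _ _ hxy
        exact hcl2 x hx y hy hxy
      · obtain ⟨v, hvm, w, hwm, hvw, hnvw, hsv, hsw⟩ := hpair
        have hone : v ∈ Z ∨ w ∈ Z := by
          by_contra hno
          push_neg at hno
          have hvS : v ∈ S := (Finset.mem_union.mp hvm).resolve_left hno.1
          have hwS : w ∈ S := (Finset.mem_union.mp hwm).resolve_left hno.2
          exact hnvw (hSclique v hvS w hwS hvw)
        rcases hone with hvZ | hwZ
        · exact ⟨v, hvZ, htrans v hvZ hsv⟩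
        · exact ⟨w, hwZ, htrans w hwZ hsw⟩
    have hy0nX : y0 ∉ X := by
      intro h
      exact hSsep ((hXmem y0).mp h).2
    have hx0nY : x0 ∉ Y := by
      intro h
      exact hSsep (((hYmem x0).mp h).2).symm
    have hXrest : (A \ (X ∪ S)).Nonempty := by
      refine ⟨y0, Finset.mem_sdiff.mpr ⟨hy0A, ?_⟩⟩
      rw [Finset.mem_union]
      rintro (h | h)
      · exact hy0nX h
      · exact hSy0 h
    have hYrest : (A \ (Y ∪ S)).Nonempty := by
      refine ⟨x0, Finset.mem_sdiff.mpr ⟨hx0A, ?_⟩⟩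
      rw [Finset.mem_union]
      rintro (h | h)
      · exact hx0nY h
      · exact hSx0 h
    obtain ⟨pX, hpXX, hpXs⟩ := hcompstep X ⟨x0, hx0X⟩ hXsub hXclosed hXrest
    obtain ⟨pY, hpYY, hpYs⟩ := hcompstep Y ⟨y0, hy0Y⟩ hYsub hYclosed hYrest
    refine ⟨pX, (Finset.mem_sdiff.mp (hXsub hpXX)).1, pY,
      (Finset.mem_sdiff.mp (hYsub hpYY)).1, ?_, hcross pX hpXX pY hpYY, hpXs, hpYs⟩
    intro h
    exact hXY pY (h ▸ hpXX) hpYY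


lemma concat_split {α : Type} {l' : List α} {v u : α} {pre suf : List α}
    (h : l' ++ [v] = pre ++ u :: suf) :
    (pre = l' ∧ u = v ∧ suf = []) ∨ (∃ s', suf = s' ++ [v] ∧ l' = pre ++ u :: s') := by
  rcases List.eq_nil_or_concat suf with rfl | ⟨s', v', rfl⟩
  · have h2 := List.append_inj' h (by simp)
    exact Or.inl ⟨h2.1.symm, by simpa using h2.2.symm, rfl⟩
  · rw [List.concat_eq_append,
      show pre ++ u :: (s' ++ [v']) = (pre ++ u :: s') ++ [v'] by simp] at h
    have h2 := List.append_inj' h (by simp)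
    have hv : v = v' := by simpa using h2.2
    exact Or.inr ⟨s', by rw [List.concat_eq_append, hv], h2.1⟩

/-- A chordal graph with no 4-clique has a vertex of degree at most 2 inside any
nonempty finite set. -/
lemma exists_deg_le_two [Fintype V] [DecidableRel M.Adj] (hM : IsChordalGraph M)
    (hclq : M.cliqueNum ≤ 3) (B : Finset V) (hne : B.Nonempty) :
    ∃ v ∈ B, (B.filter (fun u => M.Adj v u)).card ≤ 2 := by
  classical
  rcases dirac hM B.card B le_rfl hne with hcl | ⟨v, hv, w, hw, hvw, hnadj, hsv, hsw⟩
  · obtain ⟨v, hv⟩ := hne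
    have hBclq : M.IsClique ↑B := by
      intro x hx y hy hxy
      exact hcl x hx y hy hxy
    have hB3 : B.card ≤ 3 := le_trans (IsClique.card_le_cliqueNum (tc := hBclq)) hclq
    refine ⟨v, hv, ?_⟩
    have hsub : B.filter (fun u => M.Adj v u) ⊆ B.erase v := by
      intro u hu
      rw [Finset.mem_filter] at hu
      exact Finset.mem_erase.mpr ⟨fun h => M.loopless.irrefl v (h ▸ hu.2), hu.1⟩
    have := Finset.card_le_card hsub
    rw [Finset.card_erase_of_mem hv] at this
    omega
  · refine ⟨v, hv, ?_⟩
    set N := B.filter (fun u => M.Adj v u) with hN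
    have hvN : v ∉ N := by
      intro h
      rw [hN, Finset.mem_filter] at h
      exact M.loopless.irrefl v h.2
    have hclq2 : M.IsClique ↑(insert v N) := by
      intro x hx y hy hxy
      simp only [Finset.coe_insert, Set.mem_insert_iff, Finset.mem_coe] at hx hy
      rcases hx with rfl | hx <;> rcases hy with rfl | hy
      · exact absurd rfl hxy
      · exact ((Finset.mem_filter.mp hy).2)
      · exact ((Finset.mem_filter.mp hx).2).symm
      · rw [hN, Finset.mem_filter] at hx hy
        exact hsv x hx.1 y hy.1 hx.2 hy.2 hxy
    have hcard : (insert v N).card ≤ 3 :=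
      le_trans (IsClique.card_le_cliqueNum (tc := hclq2)) hclq
    rw [Finset.card_insert_of_notMem hvN] at hcard
    omega

/-- In a chordal graph, a triangle-free region has a vertex of degree at most 1 inside
any nonempty subset. -/
lemma exists_deg_le_one [Fintype V] [DecidableRel M.Adj] (hM : IsChordalGraph M)
    (A : Finset V)
    (htf : ∀ x ∈ A, ∀ y ∈ A, ∀ z ∈ A, M.Adj x y → M.Adj y z → M.Adj z x → False)
    (B : Finset V) (hBA : B ⊆ A) (hne : B.Nonempty) :
    ∃ v ∈ B, (B.filter (fun u => M.Adj v u)).card ≤ 1 := by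
  classical
  by_contra hcon
  push_neg at hcon
  have hdeg : ∀ v ∈ B, ∃ u1 u2, u1 ∈ B ∧ u2 ∈ B ∧ u1 ≠ u2 ∧ M.Adj v u1 ∧ M.Adj v u2 := by
    intro v hv
    have h2 := hcon v hv
    obtain ⟨u1, hu1, u2, hu2, hne12⟩ := Finset.one_lt_card.mp h2
    rw [Finset.mem_filter] at hu1 hu2
    exact ⟨u1, u2, hu1.1, hu2.1, hne12, hu1.2, hu2.2⟩
  obtain ⟨w0, c0, hc0, hc0sup⟩ := exists_cycle_of_min_degree_two B hdeg hne
  set Lc : Set ℕ := {m | ∃ (w : V) (c : M.Walk w w), c.IsCycle ∧ c.length = m ∧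
    ∀ z ∈ c.support, z ∈ B} with hLc
  have hLcne : Lc.Nonempty := ⟨c0.length, w0, c0, hc0, rfl, hc0sup⟩
  obtain ⟨w, c, hcyc, hlen, hsup⟩ := Nat.sInf_mem hLcne
  have hnot4 : ¬ (4 ≤ c.length) := by
    intro h4
    obtain ⟨a, b, ha, hb, hab, hch⟩ := hM c hcyc h4
    obtain ⟨w', c', hcyc', hlt, hsub⟩ := chord_split c hcyc ha hb hab hch
    have : c'.length ∈ Lc := ⟨w', c', hcyc', rfl, fun z hz => hsup z (hsub z hz)⟩
    have := Nat.sInf_le this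
    omega
  have h3 : c.length = 3 := by
    have := hcyc.three_le_length
    omega
  obtain ⟨x, y, h1, h2, h3', hx, hy⟩ := triangle_of_cycle_length_three c h3
  exact htf w (hBA (hsup w c.start_mem_support)) x (hBA (hsup x hx)) y (hBA (hsup y hy))
    h1 h2 h3'

/-- Peeling order: produces an enumeration of `A` where each vertex has at most `d`
earlier neighbours. -/
lemma peel_order [Fintype V] [DecidableEq V] [DecidableRel M.Adj] (d : ℕ) (A : Finset V)
    (hA : ∀ B ⊆ A, B.Nonempty → ∃ v ∈ B, (B.filter (fun u => M.Adj v u)).card ≤ d) :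
    ∃ l : List V, l.Nodup ∧ l.toFinset = A ∧
      ∀ pre v suf, l = pre ++ v :: suf → (pre.filter (fun u => M.Adj v u)).length ≤ d := by
  classical
  suffices h : ∀ (n : ℕ) (A : Finset V), A.card ≤ n →
      (∀ B ⊆ A, B.Nonempty → ∃ v ∈ B, (B.filter (fun u => M.Adj v u)).card ≤ d) →
      ∃ l : List V, l.Nodup ∧ l.toFinset = A ∧
        ∀ pre v suf, l = pre ++ v :: suf → (pre.filter (fun u => M.Adj v u)).length ≤ d by
    exact h A.card A le_rfl hA
  intro n
  induction n with
  | zero =>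
    intro A hcard _
    have : A = ∅ := Finset.card_eq_zero.mp (by omega)
    subst this
    refine ⟨[], by simp, by simp, ?_⟩
    intro pre v suf h
    exact absurd h (by simp)
  | succ n ih =>
    intro A hcard hAp
    rcases Finset.eq_empty_or_nonempty A with rfl | hne
    · refine ⟨[], by simp, by simp, ?_⟩
      intro pre v suf h
      exact absurd h (by simp)
    obtain ⟨v, hvA, hvdeg⟩ := hAp A le_rfl hne
    have hcard' : (A.erase v).card ≤ n := by
      have := Finset.card_erase_of_mem hvA
      have := Finset.card_pos.mpr hne
      omega
    obtain ⟨l', hnd', htf', hdeg'⟩ := ih (A.erase v) hcard'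
      (fun B hB hBne => hAp B (hB.trans (Finset.erase_subset _ _)) hBne)
    have hvl' : v ∉ l' := by
      rw [← List.mem_toFinset, htf']
      simp
    refine ⟨l' ++ [v], ?_, ?_, ?_⟩
    · rw [List.nodup_append']
      exact ⟨hnd', List.nodup_singleton v, by simpa using hvl'⟩
    · rw [List.toFinset_append, htf']
      show A.erase v ∪ [v].toFinset = A
      simp only [List.toFinset_cons, List.toFinset_nil, LawfulSingleton.insert_empty_eq]
      rw [Finset.union_comm, ← Finset.insert_eq, Finset.insert_erase hvA]
    · intro pre u suf h
      rcases concat_split h with ⟨rfl, rfl, rfl⟩ | ⟨s', rfl, h2⟩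
      · -- pre = l', u = v
        have hfn : (pre.filter (fun u' => M.Adj u u')).toFinset =
            (A.erase u).filter (fun u' => M.Adj u u') := by
          rw [← htf', List.toFinset_filter]
          exact Finset.filter_congr (fun x _ => by simp)
        have hnodup : (pre.filter (fun u' => M.Adj u u')).Nodup := hnd'.filter _
        have hlen : (pre.filter (fun u' => M.Adj u u')).length =
            ((A.erase u).filter (fun u' => M.Adj u u')).card := by
          rw [← hfn, List.toFinset_card_of_nodup hnodup]
        rw [hlen]
        refine le_trans (Finset.card_le_card (Finset.filter_subset_filter _
          (Finset.erase_subset _ _))) hvdeg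
      · exact hdeg' pre u s' h2


/-- Greedy DP-colouring along a low-back-degree enumeration. -/
lemma greedy {V W : Type} [DecidableEq V] (G : SimpleGraph V) [DecidableRel G.Adj]
    {H : SimpleGraph W} {L : V → Finset W} (cov : DPCover G H L) (t : ℕ) (ht : 1 ≤ t)
    (hL : ∀ v, (L v).card = t) :
    ∀ (l : List V), l.Nodup →
    (∀ pre v suf, l = pre ++ v :: suf → (pre.filter (fun u => G.Adj u v)).length < t) →
    ∃ c : V → W, (∀ v ∈ l, c v ∈ L v) ∧
      (∀ u ∈ l, ∀ u' ∈ l, u ≠ u' → ¬ H.Adj (c u) (c u')) := by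
  classical
  have hLne : ∀ v, (L v).Nonempty := fun v => Finset.card_pos.mp (by rw [hL v]; omega)
  intro l
  induction l using List.reverseRecOn with
  | nil => exact fun _ _ => ⟨fun v => (hLne v).choose, by simp, by simp⟩
  | append_singleton l' v ih =>
    intro hnd hdeg
    have hnd' : l'.Nodup := (List.nodup_append'.mp hnd).1
    have hvl' : v ∉ l' := by
      intro hm
      exact ((List.nodup_append'.mp hnd).2.2) hm (by simp)
    obtain ⟨c, hc1, hc2⟩ := ih hnd'
      (fun pre u suf h => hdeg pre u (suf ++ [v]) (by rw [h]; simp))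
    set F := (L v).filter (fun b => ∃ u ∈ l', H.Adj (c u) b) with hFdef
    have hGadj : ∀ u ∈ l', ∀ b ∈ L v, H.Adj (c u) b → G.Adj u v := by
      intro u hu b hb hadj
      by_contra hnadj
      have huv : u ≠ v := fun h => hvl' (h ▸ hu)
      exact cov.nonadj huv hnadj (c u) (hc1 u hu) b hb hadj
    have hFcard : F.card ≤ (l'.filter (fun u => G.Adj u v)).length := by
      have hlen : (l'.filter (fun u => G.Adj u v)).length =
          ((l'.toFinset).filter (fun u => G.Adj u v)).card := by
        rw [← List.toFinset_card_of_nodup (hnd'.filter _), List.toFinset_filter]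
        congr 1
        exact Finset.filter_congr (fun x _ => by simp)
      rw [hlen]
      have hwit : ∀ b, b ∈ F → ∃ u, u ∈ l' ∧ H.Adj (c u) b := by
        intro b hb
        obtain ⟨-, u, hu, hadj⟩ := Finset.mem_filter.mp hb
        exact ⟨u, hu, hadj⟩
      set f : W → V := fun b =>
        if h : ∃ u, u ∈ l' ∧ H.Adj (c u) b then h.choose else v with hfdef
      have hfspec : ∀ b, b ∈ F → f b ∈ l' ∧ H.Adj (c (f b)) b := by
        intro b hb
        have h := hwit b hb
        have hfb : f b = h.choose := by rw [hfdef]; simp only [dif_pos h]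
        rw [hfb]
        exact h.choose_spec
      apply Finset.card_le_card_of_injOn f
      · intro b hb
        have hspec := hfspec b hb
        rw [Finset.mem_coe, Finset.mem_filter, List.mem_toFinset]
        exact ⟨hspec.1, hGadj _ hspec.1 b (Finset.mem_filter.mp hb).1 hspec.2⟩
      · intro b hb b' hb' hff
        simp only [Finset.mem_coe] at hb hb'
        have hspec := hfspec b hb
        have hspec' := hfspec b' hb'
        rw [hff] at hspec
        exact cov.matching (hGadj _ hspec'.1 b' (Finset.mem_filter.mp hb').1 hspec'.2)
          (c (f b')) (hc1 _ hspec'.1) b (Finset.mem_filter.mp hb).1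
          b' (Finset.mem_filter.mp hb').1 hspec.2 hspec'.2
    have hlt : F.card < (L v).card := by
      rw [hL v]
      exact lt_of_le_of_lt hFcard (hdeg l' v [] rfl)
    have hnsub : ¬ (L v) ⊆ F := fun hsub => absurd (Finset.card_le_card hsub) (by omega)
    obtain ⟨b, hbL, hbF⟩ := Finset.not_subset.mp hnsub
    have hnoadj : ∀ u ∈ l', ¬ H.Adj (c u) b := by
      intro u hu hadj
      exact hbF (Finset.mem_filter.mpr ⟨hbL, u, hu, hadj⟩)
    refine ⟨Function.update c v b, ?_, ?_⟩
    · intro u hu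
      rcases List.mem_append.mp hu with hu | hu
      · have huv : u ≠ v := fun h => hvl' (h ▸ hu)
        rw [Function.update_of_ne huv]
        exact hc1 u hu
      · rw [List.mem_singleton] at hu
        subst hu
        rw [Function.update_self]
        exact hbL
    · intro u hu u' hu' hne'
      rcases List.mem_append.mp hu with hu | hu <;>
        rcases List.mem_append.mp hu' with hu' | hu'
      · have h1 : u ≠ v := fun h => hvl' (h ▸ hu)
        have h2 : u' ≠ v := fun h => hvl' (h ▸ hu')
        rw [Function.update_of_ne h1, Function.update_of_ne h2]
        exact hc2 u hu u' hu' hne'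
      · rw [List.mem_singleton] at hu'
        have h1 : u ≠ v := fun h => hvl' (h ▸ hu)
        rw [hu', Function.update_of_ne h1, Function.update_self]
        exact hnoadj u hu
      · rw [List.mem_singleton] at hu
        have h2 : u' ≠ v := fun h => hvl' (h ▸ hu')
        rw [hu, Function.update_of_ne h2, Function.update_self]
        exact fun h => hnoadj u' hu' h.symm
      · rw [List.mem_singleton] at hu hu'
        exact absurd (hu.trans hu'.symm) hne'
/-- From a greedy colouring of a list, an independent set of that size. -/
lemma greedy_indep {V W : Type} [DecidableEq V] [DecidableEq W] (G : SimpleGraph V)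
    [DecidableRel G.Adj]
    {H : SimpleGraph W} {L : V → Finset W} (cov : DPCover G H L) (t : ℕ) (ht : 1 ≤ t)
    (hL : ∀ v, (L v).card = t) (l : List V) (hnd : l.Nodup)
    (hdeg : ∀ pre v suf, l = pre ++ v :: suf →
      (pre.filter (fun u => G.Adj u v)).length < t) :
    ∃ S : Finset W, IsIndepFinset H S ∧ S.card = l.length := by
  classical
  obtain ⟨c, hc1, hc2⟩ := greedy G cov t ht hL l hnd hdeg
  refine ⟨l.toFinset.image c, ?_, ?_⟩
  · intro a ha b hb
    obtain ⟨u, hu, rfl⟩ := Finset.mem_image.mp ha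
    obtain ⟨u', hu', rfl⟩ := Finset.mem_image.mp hb
    rw [List.mem_toFinset] at hu hu'
    by_cases huu : u = u'
    · subst huu
      exact fun h => H.loopless.irrefl _ h
    · exact hc2 u hu u' hu' huu
  · rw [Finset.card_image_of_injOn, List.toFinset_card_of_nodup hnd]
    intro u hu u' hu' hcc
    simp only [Finset.mem_coe, List.mem_toFinset] at hu hu'
    obtain ⟨v0, hv0, huniq⟩ := cov.partition (c u)
    have h1 : u = v0 := huniq u (hc1 u hu)
    have h2 : u' = v0 := huniq u' (show c u ∈ L u' by rw [hcc]; exact hc1 u' hu')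
    rw [h1, h2]


/-- Filter length monotonicity. -/
lemma length_filter_mono {α : Type} (l : List α) (p q : α → Prop) [DecidablePred p]
    [DecidablePred q] (h : ∀ a ∈ l, p a → q a) :
    (l.filter (fun a => p a)).length ≤ (l.filter (fun a => q a)).length := by
  induction l with
  | nil => simp
  | cons a l ih =>
    have ih' := ih (fun b hb hp => h b (List.mem_cons_of_mem a hb) hp)
    by_cases hp : p a
    · have hq : q a := h a (List.mem_cons_self) hp
      rw [List.filter_cons_of_pos (by simpa using hp), List.filter_cons_of_pos
        (by simpa using hq), List.length_cons, List.length_cons]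
      omega
    · rw [List.filter_cons_of_neg (by simpa using hp)]
      by_cases hq : q a
      · rw [List.filter_cons_of_pos (by simpa using hq), List.length_cons]
        omega
      · rw [List.filter_cons_of_neg (by simpa using hq)]
        exact ih'

/-- The canonical cover graph. -/
def canonH {V : Type} (G : SimpleGraph V) (m : ℕ) : SimpleGraph (V × Fin m) where
  Adj a b := (a.1 = b.1 ∧ a.2 ≠ b.2) ∨ (G.Adj a.1 b.1 ∧ a.2 = b.2)
  symm := ⟨by
    rintro a b (⟨h1, h2⟩ | ⟨h1, h2⟩)
    · exact Or.inl ⟨h1.symm, h2.symm⟩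
    · exact Or.inr ⟨h1.symm, h2.symm⟩⟩
  loopless := ⟨by
    rintro a (⟨h1, h2⟩ | ⟨h1, h2⟩)
    · exact h2 rfl
    · exact G.loopless.irrefl _ h1⟩

/-- The canonical cover lists. -/
def canonL {V : Type} [Fintype V] [DecidableEq V] (m : ℕ) : V → Finset (V × Fin m) :=
  fun v => Finset.univ.filter (fun w => w.1 = v)

lemma canonL_card {V : Type} [Fintype V] [DecidableEq V] (m : ℕ) (v : V) :
    (canonL m v).card = m := by
  have : canonL (V := V) m v = {v} ×ˢ Finset.univ := by
    ext ⟨a, i⟩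
    simp [canonL, Finset.mem_product, eq_comm]
  rw [this, Finset.card_product]
  simp

lemma canon_cover {V : Type} [Fintype V] [DecidableEq V] (G : SimpleGraph V) (m : ℕ) :
    DPCover G (canonH G m) (canonL m) := by
  constructor
  · intro w
    refine ⟨w.1, by simp [canonL], fun y hy => ?_⟩
    simp only [canonL, Finset.mem_filter, Finset.mem_univ, true_and] at hy
    exact hy.symm
  · intro v a ha b hb hab
    simp only [canonL, Finset.mem_filter, Finset.mem_univ, true_and] at ha hb
    refine Or.inl ⟨by rw [ha, hb], fun h2 => hab (Prod.ext (by rw [ha, hb]) h2)⟩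
  · intro u v huv a ha b hb b' hb' h1 h2
    simp only [canonL, Finset.mem_filter, Finset.mem_univ, true_and] at ha hb hb'
    have hne : u ≠ v := G.ne_of_adj huv
    rcases h1 with ⟨hf, -⟩ | ⟨-, hs⟩
    · exact absurd (by rw [← ha, hf, hb]) hne
    rcases h2 with ⟨hf', -⟩ | ⟨-, hs'⟩
    · exact absurd (by rw [← ha, hf', hb']) hne
    exact Prod.ext (by rw [hb, hb']) (by rw [← hs, ← hs'])
  · intro u v hne hnadj a ha b hb h
    simp only [canonL, Finset.mem_filter, Finset.mem_univ, true_and] at ha hb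
    rcases h with ⟨hf, -⟩ | ⟨hadj, -⟩
    · exact hne (by rw [← ha, hf, hb])
    · exact hnadj (by rwa [ha, hb] at hadj)

/-- From an independent set of full size in the canonical cover, a proper colouring. -/
lemma coloring_of_indep {V : Type} [Fintype V] [DecidableEq V] (G : SimpleGraph V) (m : ℕ)
    (S : Finset (V × Fin m)) (hS : IsIndepFinset (canonH G m) S)
    (hcard : S.card = Fintype.card V) :
    ∃ c : V → Fin m, ∀ ⦃u v⦄, G.Adj u v → c u ≠ c v := by
  classical
  set f : V → Finset (V × Fin m) := fun v => S.filter (fun w => w.1 = v) with hfdef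
  have hfib_le : ∀ v, (f v).card ≤ 1 := by
    intro v
    by_contra h
    push_neg at h
    obtain ⟨a, ha, b, hb, hab⟩ := Finset.one_lt_card.mp h
    rw [hfdef, Finset.mem_filter] at ha hb
    have hadj : (canonH G m).Adj a b :=
      Or.inl ⟨by rw [ha.2, hb.2], fun h2 => hab (Prod.ext (by rw [ha.2, hb.2]) h2)⟩
    exact hS a ha.1 b hb.1 hadj
  have hsum : ∑ v ∈ Finset.univ, (f v).card = S.card :=
    (Finset.card_eq_sum_card_fiberwise (fun w _ => Finset.mem_univ w.1)).symm
  have hall : ∀ v ∈ (Finset.univ : Finset V), (f v).card = 1 := by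
    rw [← Finset.sum_eq_sum_iff_of_le (fun i _ => hfib_le i)]
    rw [hsum, hcard]
    simp [Finset.card_univ]
  have hone : ∀ v : V, ∃ a, f v = {a} :=
    fun v => Finset.card_eq_one.mp (hall v (Finset.mem_univ v))
  choose g hg using hone
  refine ⟨fun v => (g v).2, ?_⟩
  intro u v huv heq
  have hmu : g u ∈ f u := by rw [hg u]; exact Finset.mem_singleton_self _
  have hmv : g v ∈ f v := by rw [hg v]; exact Finset.mem_singleton_self _
  rw [hfdef, Finset.mem_filter] at hmu hmv
  have hadj : (canonH G m).Adj (g u) (g v) :=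
    Or.inr ⟨by rw [hmu.2, hmv.2]; exact huv, heq⟩
  exact hS _ hmu.1 _ hmv.1 hadj

/-- Lower bound on `alphaDP` from a uniform independent-set guarantee. -/
lemma alphaDP_ge {V : Type} [Fintype V] (G : SimpleGraph V) (t B : ℕ)
    (hall : ∀ (W : Type) (instW : Fintype W) (H : SimpleGraph W) (L : V → Finset W),
      DPCover G H L → (∀ v, (L v).card = t) →
      ∃ S : Finset W, IsIndepFinset H S ∧ B ≤ S.card) :
    B ≤ alphaDP G t := by
  classical
  have hne : {n : ℕ | ∃ (W : Type) (_ : Fintype W) (H : SimpleGraph W) (L : V → Finset W),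
      DPCover G H L ∧ (∀ v, (L v).card = t) ∧ _root_.indepNum H = n}.Nonempty := by
    exact ⟨_root_.indepNum (canonH G t), V × Fin t, inferInstance, canonH G t, canonL t,
      canon_cover G t, fun v => canonL_card t v, rfl⟩
  apply le_csInf hne
  rintro n ⟨W, instW, H, L, hcov, hcards, rfl⟩
  obtain ⟨S, hSind, hScard⟩ := hall W instW H L hcov hcards
  refine le_trans hScard (le_csSup ?_ ?_)
  · refine ⟨Fintype.card W, ?_⟩
    rintro k ⟨S', -, rfl⟩
    exact Finset.card_le_univ S'
  · exact ⟨S, hSind, rfl⟩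


/-- Pigeonhole: some colour class is large. -/
lemma pigeon_max {V : Type} [Fintype V] [DecidableEq V] (m : ℕ) (hm : 0 < m)
    (c : V → Fin m) :
    ∃ i, Fintype.card V ≤ m * (Finset.univ.filter (fun v => c v = i)).card := by
  classical
  have hsum : ∑ i ∈ (Finset.univ : Finset (Fin m)),
      (Finset.univ.filter (fun v => c v = i)).card = Fintype.card V := by
    rw [← Finset.card_eq_sum_card_fiberwise (fun v _ => Finset.mem_univ (c v))]
    exact Finset.card_univ
  have hne : (Finset.univ : Finset (Fin m)).Nonempty := ⟨⟨0, hm⟩, Finset.mem_univ _⟩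
  have hle : ∑ _i ∈ (Finset.univ : Finset (Fin m)), Fintype.card V ≤
      ∑ i ∈ (Finset.univ : Finset (Fin m)),
        m * (Finset.univ.filter (fun v => c v = i)).card := by
    rw [← Finset.mul_sum, hsum, Finset.sum_const, Finset.card_univ, Fintype.card_fin,
      smul_eq_mul]
  obtain ⟨i, -, hi⟩ := Finset.exists_le_of_sum_le hne hle
  exact ⟨i, hi⟩

/-- Pigeonhole: some colour class is small. -/
lemma pigeon_min {V : Type} [Fintype V] [DecidableEq V] (m : ℕ) (hm : 0 < m)
    (c : V → Fin m) :
    ∃ i, m * (Finset.univ.filter (fun v => c v = i)).card ≤ Fintype.card V := by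
  classical
  have hsum : ∑ i ∈ (Finset.univ : Finset (Fin m)),
      (Finset.univ.filter (fun v => c v = i)).card = Fintype.card V := by
    rw [← Finset.card_eq_sum_card_fiberwise (fun v _ => Finset.mem_univ (c v))]
    exact Finset.card_univ
  have hne : (Finset.univ : Finset (Fin m)).Nonempty := ⟨⟨0, hm⟩, Finset.mem_univ _⟩
  have hle : ∑ i ∈ (Finset.univ : Finset (Fin m)),
      m * (Finset.univ.filter (fun v => c v = i)).card ≤
      ∑ _i ∈ (Finset.univ : Finset (Fin m)), Fintype.card V := by
    rw [← Finset.mul_sum, hsum, Finset.sum_const, Finset.card_univ, Fintype.card_fin,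
      smul_eq_mul]
  obtain ⟨i, -, hi⟩ := Finset.exists_le_of_sum_le hne hle
  exact ⟨i, hi⟩

/-- alphaDP lower bound from a good enumeration of a subset. -/
lemma alpha_ge_of_order {V : Type} [Fintype V] [DecidableEq V] (G : SimpleGraph V)
    [DecidableRel G.Adj] (t : ℕ) (ht : 1 ≤ t) (U : Finset V) (l : List V)
    (hnd : l.Nodup) (htf : l.toFinset = U)
    (hdeg : ∀ pre v suf, l = pre ++ v :: suf →
      (pre.filter (fun u => G.Adj u v)).length < t) :
    U.card ≤ alphaDP G t := by
  apply alphaDP_ge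
  intro W instW H L hcov hcards
  letI : DecidableEq W := Classical.decEq W
  obtain ⟨S, h1, h2⟩ := greedy_indep G hcov t ht hcards l hnd hdeg
  refine ⟨S, h1, ?_⟩
  rw [h2, ← htf, List.toFinset_card_of_nodup hnd]

end DPAux

/-- Every graph of treewidth at most 2 (in particular every series-parallel graph) is
partially DP-nice: if there is a chordal graph `M` on the same vertex set as `G` with
`E(G) ⊆ E(M)` and `ω(M) ≤ 3`, then `G` is partially DP-nice. -/
theorem partiallyDPNice_of_treewidth_le_two {V : Type} [Fintype V]
    (G : SimpleGraph V) (M : SimpleGraph V) (hM : IsChordalGraph M) (hle : G ≤ M)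
    (hclique : M.cliqueNum ≤ 3) : PartiallyDPNice G := by
  classical
  intro t ht htk
  letI : DecidableEq V := Classical.decEq V
  letI : DecidableRel M.Adj := Classical.decRel _
  letI : DecidableRel G.Adj := Classical.decRel _
  set n := Fintype.card V with hn
  -- an ordering of all of V with back-degree at most 2 in M
  obtain ⟨l, hlnd, hltf, hldeg⟩ := DPAux.peel_order (M := M) 2 Finset.univ
    (fun B _ hBne => DPAux.exists_deg_le_two hM hclique B hBne)
  have hllen : l.length = n := by
    rw [← List.toFinset_card_of_nodup hlnd, hltf, hn]
    exact Finset.card_univ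
  have hdegG : ∀ pre v suf, l = pre ++ v :: suf →
      (pre.filter (fun u => G.Adj u v)).length < 3 := by
    intro pre v suf h
    have h1 := hldeg pre v suf h
    have h2 := DPAux.length_filter_mono pre (fun u => G.Adj u v) (fun u => M.Adj v u)
      (fun a _ hadj => (hle hadj).symm)
    beta_reduce at h2
    omega
  have hdegM : ∀ pre v suf, l = pre ++ v :: suf →
      (pre.filter (fun u => M.Adj u v)).length < 3 := by
    intro pre v suf h
    have h1 := hldeg pre v suf h
    have h2 := DPAux.length_filter_mono pre (fun u => M.Adj u v) (fun u => M.Adj v u)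
      (fun a _ hadj => hadj.symm)
    beta_reduce at h2
    omega
  have h3G : (3:ℕ) ∈ {m : ℕ | ∀ (W : Type) (_ : Fintype W) (H : SimpleGraph W)
      (L : V → Finset W), DPCover G H L → (∀ v, (L v).card = m) →
      ∃ S : Finset W, IsIndepFinset H S ∧ S.card = Fintype.card V} := by
    intro W instW H L hcov hcards
    letI : DecidableEq W := Classical.decEq W
    obtain ⟨S, hSi, hSc⟩ := DPAux.greedy_indep G hcov 3 (by norm_num) hcards l hlnd hdegG
    exact ⟨S, hSi, by rw [hSc, hllen]⟩
  have hkle3 : chiDP G ≤ 3 := Nat.sInf_le h3G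
  have hk1 : 1 ≤ chiDP G := le_trans ht htk
  have hkmem : chiDP G ∈ {m : ℕ | ∀ (W : Type) (_ : Fintype W) (H : SimpleGraph W)
      (L : V → Finset W), DPCover G H L → (∀ v, (L v).card = m) →
      ∃ S : Finset W, IsIndepFinset H S ∧ S.card = Fintype.card V} :=
    Nat.sInf_mem ⟨3, h3G⟩
  have hkpos : (0:ℚ) < (chiDP G : ℚ) := by exact_mod_cast hk1
  rw [div_le_iff₀ hkpos]
  suffices hnat : t * n ≤ alphaDP G t * chiDP G by exact_mod_cast hnat
  by_cases hteq : t = chiDP G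
  · -- full colouring case
    have hα : n ≤ alphaDP G t := by
      apply DPAux.alphaDP_ge
      intro W instW H L hcov hcards
      obtain ⟨S, h1, h2⟩ := hkmem W instW H L hcov (by rw [← hteq]; exact hcards)
      exact ⟨S, h1, le_of_eq h2.symm⟩
    calc t * n ≤ t * alphaDP G t := Nat.mul_le_mul_left t hα
      _ = alphaDP G t * chiDP G := by rw [hteq, Nat.mul_comm]
  · have htlt : t < chiDP G := lt_of_le_of_ne htk hteq
    have hk2or3 : chiDP G = 2 ∨ chiDP G = 3 := by omega
    rcases hk2or3 with hk2 | hk3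
    · -- t = 1, χ = 2 : use a proper 2-colouring of G
      have ht1 : t = 1 := by omega
      obtain ⟨S, hSi, hSc⟩ := hkmem (V × Fin 2) inferInstance (DPAux.canonH G 2)
        (DPAux.canonL 2) (DPAux.canon_cover G 2)
        (fun v => by rw [DPAux.canonL_card 2 v, hk2])
      obtain ⟨c, hcprop⟩ := DPAux.coloring_of_indep G 2 S hSi hSc
      obtain ⟨i, hUcard⟩ := DPAux.pigeon_max 2 (by norm_num) c
      set U := Finset.univ.filter (fun v => c v = i) with hU
      have hα : U.card ≤ alphaDP G t := by
        refine DPAux.alpha_ge_of_order G t (by omega) U U.toList U.nodup_toList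
          (Finset.toList_toFinset U) ?_
        intro pre v suf h
        rw [ht1]
        have hpre : ∀ a ∈ pre, ¬ G.Adj a v := by
          intro a ha hadj
          have haU : a ∈ U := by
            rw [← Finset.toList_toFinset U, List.mem_toFinset, h]
            exact List.mem_append.mpr (Or.inl ha)
          have hvU : v ∈ U := by
            rw [← Finset.toList_toFinset U, List.mem_toFinset, h]
            exact List.mem_append.mpr (Or.inr (List.mem_cons_self))
          rw [hU, Finset.mem_filter] at haU hvU
          exact hcprop hadj (by rw [haU.2, hvU.2])
        have : pre.filter (fun u => G.Adj u v) = [] :=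
          List.filter_eq_nil_iff.mpr (fun a ha => by simpa using hpre a ha)
        rw [this]
        norm_num
      rw [ht1] at hα
      rw [ht1, hk2]
      omega
    · -- χ = 3 : use a proper 3-colouring of M
      letI : DecidableEq (V × Fin 3) := Classical.decEq _
      obtain ⟨S, hSi, hSc⟩ := DPAux.greedy_indep M (DPAux.canon_cover M 3) 3 (by norm_num)
        (fun v => DPAux.canonL_card 3 v) l hlnd hdegM
      obtain ⟨c, hcprop⟩ := DPAux.coloring_of_indep M 3 S hSi (by rw [hSc, hllen])
      by_cases ht1 : t = 1
      · obtain ⟨i, hUcard⟩ := DPAux.pigeon_max 3 (by norm_num) c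
        set U := Finset.univ.filter (fun v => c v = i) with hU
        have hα : U.card ≤ alphaDP G t := by
          refine DPAux.alpha_ge_of_order G t (by omega) U U.toList U.nodup_toList
            (Finset.toList_toFinset U) ?_
          intro pre v suf h
          rw [ht1]
          have hpre : ∀ a ∈ pre, ¬ G.Adj a v := by
            intro a ha hadj
            have haU : a ∈ U := by
              rw [← Finset.toList_toFinset U, List.mem_toFinset, h]
              exact List.mem_append.mpr (Or.inl ha)
            have hvU : v ∈ U := by
              rw [← Finset.toList_toFinset U, List.mem_toFinset, h]
              exact List.mem_append.mpr (Or.inr (List.mem_cons_self))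
            rw [hU, Finset.mem_filter] at haU hvU
            exact hcprop (hle hadj) (by rw [haU.2, hvU.2])
          have : pre.filter (fun u => G.Adj u v) = [] :=
            List.filter_eq_nil_iff.mpr (fun a ha => by simpa using hpre a ha)
          rw [this]
          norm_num
        rw [ht1] at hα
        rw [ht1, hk3]
        omega
      · have ht2 : t = 2 := by omega
        obtain ⟨i0, hi0⟩ := DPAux.pigeon_min 3 (by norm_num) c
        set U := Finset.univ.filter (fun v => ¬ (c v = i0)) with hU
        have hUcard : U.card + (Finset.univ.filter (fun v => c v = i0)).card = n := by
          rw [hU, hn, ← Finset.card_univ]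
          rw [add_comm]
          exact Finset.card_filter_add_card_filter_not _
        -- U is triangle-free in M
        have htf : ∀ x ∈ U, ∀ y ∈ U, ∀ z ∈ U,
            M.Adj x y → M.Adj y z → M.Adj z x → False := by
          intro x hx y hy z hz hxy hyz hzx
          have hxy' : c x ≠ c y := hcprop hxy
          have hyz' : c y ≠ c z := hcprop hyz
          have hzx' : c z ≠ c x := hcprop hzx
          rw [hU, Finset.mem_filter] at hx hy hz
          have b1 : (c x).val < 3 := (c x).isLt
          have b2 : (c y).val < 3 := (c y).isLt
          have b3 : (c z).val < 3 := (c z).isLt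
          have b4 : (i0 : Fin 3).val < 3 := i0.isLt
          have d1 : (c x).val ≠ (c y).val := fun h => hxy' (Fin.val_injective h)
          have d2 : (c y).val ≠ (c z).val := fun h => hyz' (Fin.val_injective h)
          have d3 : (c z).val ≠ (c x).val := fun h => hzx' (Fin.val_injective h)
          have e1 : (c x).val ≠ i0.val := fun h => hx.2 (Fin.val_injective h)
          have e2 : (c y).val ≠ i0.val := fun h => hy.2 (Fin.val_injective h)
          have e3 : (c z).val ≠ i0.val := fun h => hz.2 (Fin.val_injective h)
          omega
        obtain ⟨lu, hlund, hlutf, hludeg⟩ := DPAux.peel_order (M := M) 1 U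
          (fun B hBU hBne => DPAux.exists_deg_le_one hM U htf B hBU hBne)
        have hα : U.card ≤ alphaDP G t := by
          refine DPAux.alpha_ge_of_order G t (by omega) U lu hlund hlutf ?_
          intro pre v suf h
          have h1 := hludeg pre v suf h
          have h2 := DPAux.length_filter_mono pre (fun u => G.Adj u v)
            (fun u => M.Adj v u) (fun a _ hadj => (hle hadj).symm)
          beta_reduce at h2
          omega
        rw [ht2] at hα
        rw [ht2, hk3]
        omega
end

section
/- Let G be a finite simple graph that is partially DP-nice, and let G' = G ∨ K₁ be the join of G with a single new vertex adjacent to all vertices of G. If χ_DP(G') > χ_DP(G), then G' is partially DP-nice. -/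
open SimpleGraph

/-- The join `G ∨ K_p` of `G` with the complete graph `K_p`: disjoint copies of `G` and
`K_p` together with all edges between them. -/
def joinComplete {V : Type} (G : SimpleGraph V) (p : ℕ) : SimpleGraph (V ⊕ Fin p) where
  Adj x y :=
    match x, y with
    | .inl a, .inl b => G.Adj a b
    | .inr a, .inr b => a ≠ b
    | .inl _, .inr _ => True
    | .inr _, .inl _ => True
  symm := ⟨by
    rintro (a | a) (b | b) h
    · exact G.symm.symm _ _ h
    · trivial
    · trivial
    · exact Ne.symm h⟩
  loopless := ⟨by
    rintro (a | a) h
    · exact G.loopless.irrefl a h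
    · exact h rfl⟩


-- auxiliary from here
lemma indepSet_bddAbove {W : Type} [Fintype W] (H : SimpleGraph W) :
    BddAbove {n : ℕ | ∃ S : Finset W, IsIndepFinset H S ∧ S.card = n} := by
  refine ⟨Fintype.card W, ?_⟩
  rintro n ⟨S, -, rfl⟩
  exact (Finset.card_le_univ S).trans (le_of_eq Finset.card_univ)

lemma le_indepNum {W : Type} [Fintype W] (H : SimpleGraph W) {S : Finset W}
    (h : IsIndepFinset H S) : S.card ≤ _root_.indepNum H :=
  le_csSup (indepSet_bddAbove H) ⟨S, h, rfl⟩

lemma exists_indepNum {W : Type} [Fintype W] (H : SimpleGraph W) :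
    ∃ S : Finset W, IsIndepFinset H S ∧ S.card = _root_.indepNum H := by
  have h : {n : ℕ | ∃ S : Finset W, IsIndepFinset H S ∧ S.card = n}.Nonempty :=
    ⟨0, ∅, fun a ha => (Finset.notMem_empty a ha).elim, Finset.card_empty⟩
  exact Nat.sSup_mem h (indepSet_bddAbove H)

lemma DPCover.listDisjoint {V W : Type} {G : SimpleGraph V} {H : SimpleGraph W}
    {L : V → Finset W} (hcov : DPCover G H L) {u v : V} (hne : u ≠ v) :
    Disjoint (L u) (L v) := by
  rw [Finset.disjoint_left]
  intro a hau hav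
  obtain ⟨x, -, hx⟩ := hcov.partition a
  exact hne ((hx u hau).trans (hx v hav).symm)

lemma greedy {V W : Type} (H : SimpleGraph W) (L : V → Finset W)
    (hdisj : ∀ u v : V, u ≠ v → Disjoint (L u) (L v))
    (hmatch : ∀ u v : V, u ≠ v → ∀ a ∈ L u, ∀ b ∈ L v, ∀ b' ∈ L v,
      H.Adj a b → H.Adj a b' → b = b')
    (s : Finset V) (hcard : ∀ v, s.card ≤ (L v).card) :
    ∃ S : Finset W, IsIndepFinset H S ∧ S.card = s.card ∧
      ∀ w ∈ S, ∃ v ∈ s, w ∈ L v := by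
  classical
  revert hcard
  induction s using Finset.induction with
  | empty =>
    intro _
    exact ⟨∅, fun a ha => (Finset.notMem_empty a ha).elim, by simp, by simp⟩
  | @insert v₀ s hv₀ ih =>
    intro hcard
    have hscard : ∀ v, s.card ≤ (L v).card := fun v =>
      le_trans (by rw [Finset.card_insert_of_notMem hv₀] at hcard ⊢; omega) (hcard v)
    obtain ⟨S, hSindep, hScard, hStrans⟩ := ih hscard
    set B : Finset W := (L v₀).filter (fun b => ∃ w ∈ S, H.Adj w b) with hB
    have hBcard : B.card ≤ S.card := by
      have : ∀ b ∈ B, ∃ w ∈ S, H.Adj w b := by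
        intro b hb
        exact (Finset.mem_filter.mp hb).2
      set f : W → W := fun b => if h : ∃ w ∈ S, H.Adj w b then h.choose else b with hf
      refine Finset.card_le_card_of_injOn f ?_ ?_
      · intro b hb
        have h := (Finset.mem_filter.mp hb).2
        simp only [hf, dif_pos h]
        exact h.choose_spec.1
      · intro b hb b' hb' hfeq
        have h := (Finset.mem_filter.mp hb).2
        have h' := (Finset.mem_filter.mp hb').2
        simp only [hf, dif_pos h, dif_pos h'] at hfeq
        obtain ⟨hwS, hwadj⟩ := h.choose_spec
        obtain ⟨hwS', hwadj'⟩ := h'.choose_spec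
        rw [hfeq] at hwS hwadj
        -- now h'.choose ∈ S, adj to both b and b'
        obtain ⟨u, hu, hwu⟩ := hStrans _ hwS'
        have hune : u ≠ v₀ := fun huv => hv₀ (huv ▸ hu)
        exact hmatch u v₀ hune _ hwu b (Finset.mem_filter.mp hb).1
          b' (Finset.mem_filter.mp hb').1 hwadj hwadj'
    have hBsub : B ⊆ L v₀ := Finset.filter_subset _ _
    have hlt : B.card < (L v₀).card := by
      have h1 := hcard v₀
      rw [Finset.card_insert_of_notMem hv₀] at h1
      omega
    obtain ⟨b, hbL, hbB⟩ : ∃ b ∈ L v₀, b ∉ B := by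
      by_contra hcon
      push_neg at hcon
      exact absurd (Finset.card_le_card hcon) (not_le.mpr hlt)
    have hbnoadj : ∀ w ∈ S, ¬ H.Adj w b := by
      intro w hw hadj
      exact hbB (Finset.mem_filter.mpr ⟨hbL, w, hw, hadj⟩)
    have hbS : b ∉ S := by
      intro hbs
      obtain ⟨u, hu, hbu⟩ := hStrans b hbs
      have hune : u ≠ v₀ := fun huv => hv₀ (huv ▸ hu)
      exact (Finset.disjoint_left.mp (hdisj u v₀ hune) hbu) hbL
    refine ⟨insert b S, ?_, ?_, ?_⟩
    · intro a ha a' ha'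
      rcases Finset.mem_insert.mp ha with ha | ha <;>
        rcases Finset.mem_insert.mp ha' with ha' | ha'
      · rw [ha, ha']; exact H.irrefl
      · rw [ha]; exact fun hadj => hbnoadj a' ha' (H.adj_symm hadj)
      · rw [ha']; exact hbnoadj a ha
      · exact hSindep a ha a' ha'
    · rw [Finset.card_insert_of_notMem hbS, hScard,
        Finset.card_insert_of_notMem hv₀]
    · intro w hw
      rcases Finset.mem_insert.mp hw with rfl | hw
      · exact ⟨v₀, Finset.mem_insert_self _ _, hbL⟩
      · obtain ⟨u, hu, hwu⟩ := hStrans w hw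
        exact ⟨u, Finset.mem_insert_of_mem hu, hwu⟩
lemma card_subtype_eq {W : Type} {s : Finset W} {p : W → Prop} [DecidablePred p]
    (h : ∀ w ∈ s, p w) : (s.subtype p).card = s.card := by
  rw [Finset.card_subtype, Finset.filter_true_of_mem h]

lemma restricted_dpcover {U W : Type} (G₀ : SimpleGraph U) (H : SimpleGraph W)
    (K : U → Finset W)
    (hdisj : ∀ u v : U, u ≠ v → Disjoint (K u) (K v))
    (hcliq : ∀ v : U, ∀ a ∈ K v, ∀ b ∈ K v, a ≠ b → H.Adj a b)
    (hmatch : ∀ ⦃u v : U⦄, G₀.Adj u v → ∀ a ∈ K u, ∀ b ∈ K v, ∀ b' ∈ K v,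
      H.Adj a b → H.Adj a b' → b = b')
    (hnonadj : ∀ ⦃u v : U⦄, u ≠ v → ¬ G₀.Adj u v → ∀ a ∈ K u, ∀ b ∈ K v, ¬ H.Adj a b)
    [DecidablePred fun w : W => ∃ u : U, w ∈ K u] :
    DPCover G₀ (H.comap (Subtype.val : {w : W // ∃ u : U, w ∈ K u} → W))
      (fun u => (K u).subtype fun w => ∃ u : U, w ∈ K u) := by
  constructor
  · rintro ⟨w, hw⟩
    obtain ⟨u, hu⟩ := hw
    refine ⟨u, Finset.mem_subtype.mpr hu, ?_⟩
    intro v hv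
    by_contra hne
    exact (Finset.disjoint_left.mp (hdisj v u hne) (Finset.mem_subtype.mp hv)) hu
  · intro v a ha b hb hne
    exact hcliq v a.1 (Finset.mem_subtype.mp ha) b.1 (Finset.mem_subtype.mp hb)
      (fun h => hne (Subtype.ext h))
  · intro u v huv a ha b hb b' hb' h1 h2
    exact Subtype.ext (hmatch huv a.1 (Finset.mem_subtype.mp ha) b.1 (Finset.mem_subtype.mp hb)
      b'.1 (Finset.mem_subtype.mp hb') h1 h2)
  · intro u v hne hnadj a ha b hb
    exact hnonadj hne hnadj a.1 (Finset.mem_subtype.mp ha) b.1 (Finset.mem_subtype.mp hb)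

lemma indepNum_comap_le {W : Type} [Fintype W] (H : SimpleGraph W) (p : W → Prop)
    [DecidablePred p] : _root_.indepNum (H.comap (Subtype.val : {w : W // p w} → W)) ≤ _root_.indepNum H := by
  classical
  obtain ⟨S, hS, hcard⟩ := exists_indepNum (H.comap (Subtype.val : {w : W // p w} → W))
  rw [← hcard, ← Finset.card_image_of_injective S Subtype.val_injective]
  refine le_indepNum H ?_
  intro a ha b hb
  simp only [Finset.mem_image] at ha hb
  obtain ⟨x, hx, rfl⟩ := ha
  obtain ⟨y, hy, rfl⟩ := hb
  exact hS x hx y hy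

/-- canonical `t`-fold cover graph -/
def canonH {V : Type} (G : SimpleGraph V) (t : ℕ) : SimpleGraph (V × Fin t) where
  Adj p q := (p.1 = q.1 ∧ p.2 ≠ q.2) ∨ (G.Adj p.1 q.1 ∧ p.2 = q.2)
  symm := ⟨by
    rintro ⟨u, i⟩ ⟨v, j⟩ (⟨h1, h2⟩ | ⟨h1, h2⟩)
    · exact Or.inl ⟨h1.symm, h2.symm⟩
    · exact Or.inr ⟨h1.symm, h2.symm⟩⟩
  loopless := ⟨by
    rintro ⟨u, i⟩ (⟨-, h⟩ | ⟨h, -⟩)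
    · exact h rfl
    · exact G.loopless.irrefl u h⟩

def canonL {V : Type} (t : ℕ) (v : V) : Finset (V × Fin t) :=
  Finset.univ.map ⟨fun i => (v, i), fun i j h => congrArg Prod.snd h⟩

lemma mem_canonL {V : Type} {t : ℕ} {v : V} {w : V × Fin t} :
    w ∈ canonL t v ↔ w.1 = v := by
  obtain ⟨u, i⟩ := w
  simp only [canonL, Finset.mem_map, Finset.mem_univ, true_and,
    Function.Embedding.coeFn_mk, Prod.mk.injEq]
  constructor
  · rintro ⟨j, rfl, rfl⟩; rfl
  · rintro rfl; exact ⟨i, rfl⟩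

lemma canon_cover {V : Type} (G : SimpleGraph V) (t : ℕ) :
    DPCover G (canonH G t) (canonL t) := by
  constructor
  · intro w
    exact ⟨w.1, mem_canonL.mpr rfl, fun v hv => (mem_canonL.mp hv).symm⟩
  · intro v a ha b hb hne
    have h1 := mem_canonL.mp ha
    have h2 := mem_canonL.mp hb
    exact Or.inl ⟨h1.trans h2.symm, fun h => hne (Prod.ext (h1.trans h2.symm) h)⟩
  · intro u v huv a ha b hb b' hb' hadj hadj'
    have hne : u ≠ v := G.ne_of_adj huv
    have h1 := mem_canonL.mp ha
    have h2 := mem_canonL.mp hb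
    have h2' := mem_canonL.mp hb'
    rcases hadj with ⟨h3, -⟩ | ⟨-, h3⟩
    · exact absurd (h1 ▸ h2 ▸ h3) hne
    rcases hadj' with ⟨h4, -⟩ | ⟨-, h4⟩
    · exact absurd (h1 ▸ h2' ▸ h4) hne
    · exact Prod.ext (h2.trans h2'.symm) (h3.symm.trans h4)
  · intro u v hne hnadj a ha b hb hadj
    have h1 := mem_canonL.mp ha
    have h2 := mem_canonL.mp hb
    rcases hadj with ⟨h3, -⟩ | ⟨h3, -⟩
    · exact hne (h1 ▸ h2 ▸ h3)
    · exact hnadj (h1 ▸ h2 ▸ h3)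

lemma card_canonL {V : Type} (t : ℕ) (v : V) : (canonL t v).card = t := by
  simp [canonL]

lemma alphaSet_nonempty {V : Type} [Fintype V] (G : SimpleGraph V) (t : ℕ) :
    {n : ℕ | ∃ (W : Type) (_ : Fintype W) (H : SimpleGraph W) (L : V → Finset W),
      DPCover G H L ∧ (∀ v, (L v).card = t) ∧ _root_.indepNum H = n}.Nonempty :=
  ⟨_root_.indepNum (canonH G t), V × Fin t, inferInstance, canonH G t, canonL t,
    canon_cover G t, card_canonL t, rfl⟩
def chiSet {V : Type} [Fintype V] (G : SimpleGraph V) : Set ℕ :=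
  {m : ℕ | ∀ (W : Type) (_ : Fintype W) (H : SimpleGraph W) (L : V → Finset W),
    DPCover G H L → (∀ v, (L v).card = m) →
    ∃ S : Finset W, IsIndepFinset H S ∧ S.card = Fintype.card V}

lemma chiDP_eq {V : Type} [Fintype V] (G : SimpleGraph V) : chiDP G = sInf (chiSet G) := rfl

lemma matchAll {V W : Type} {G : SimpleGraph V} {H : SimpleGraph W} {L : V → Finset W}
    (hcov : DPCover G H L) :
    ∀ u v : V, u ≠ v → ∀ a ∈ L u, ∀ b ∈ L v, ∀ b' ∈ L v,
      H.Adj a b → H.Adj a b' → b = b' := by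
  intro u v hne a ha b hb b' hb' h1 h2
  by_cases hadj : G.Adj u v
  · exact hcov.matching hadj a ha b hb b' hb' h1 h2
  · exact absurd h1 (hcov.nonadj hne hadj a ha b hb)

lemma card_mem_chiSet {V : Type} [Fintype V] (G : SimpleGraph V) :
    Fintype.card V ∈ chiSet G := by
  intro W _ H L hcov hcards
  obtain ⟨S, h1, h2, -⟩ := greedy H L (fun u v hne => hcov.listDisjoint hne) (matchAll hcov)
    Finset.univ (fun v => by rw [hcards, Finset.card_univ])
  exact ⟨S, h1, by rw [h2, Finset.card_univ]⟩

lemma chiDP_mem {V : Type} [Fintype V] (G : SimpleGraph V) : chiDP G ∈ chiSet G :=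
  Nat.sInf_mem ⟨_, card_mem_chiSet G⟩

lemma chiDP_le_card {V : Type} [Fintype V] (G : SimpleGraph V) :
    chiDP G ≤ Fintype.card V :=
  Nat.sInf_le (card_mem_chiSet G)

lemma adj_join_inl_inl {V : Type} {G : SimpleGraph V} {u v : V} :
    (joinComplete G 1).Adj (Sum.inl u) (Sum.inl v) ↔ G.Adj u v := Iff.rfl

lemma adj_join_inr_inl {V : Type} {G : SimpleGraph V} {u : V} :
    (joinComplete G 1).Adj (Sum.inr 0) (Sum.inl u) := trivial

lemma chiDP_join_le {V : Type} [Fintype V] (G : SimpleGraph V) :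
    chiDP (joinComplete G 1) ≤ chiDP G + 1 := by
  classical
  refine Nat.sInf_le ?_
  intro W instW H L hcov hcards
  -- pick a vertex in the list of the K₁ vertex
  have hne0 : (L (Sum.inr 0)).Nonempty := Finset.card_pos.mp (by rw [hcards]; omega)
  obtain ⟨w₀, hw₀⟩ := hne0
  -- for each u : V, find a sublist of size χ avoiding neighbors of w₀
  have hK : ∀ u : V, ∃ K : Finset W, K ⊆ L (Sum.inl u) ∧ K.card = chiDP G ∧
      ∀ b ∈ K, ¬ H.Adj w₀ b := by
    intro u
    have hneu : (L (Sum.inl u)).Nonempty := Finset.card_pos.mp (by rw [hcards]; omega)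
    by_cases h : ∃ b ∈ L (Sum.inl u), H.Adj w₀ b
    · obtain ⟨b₀, hb₀, hb₀adj⟩ := h
      refine ⟨(L (Sum.inl u)).erase b₀, Finset.erase_subset _ _, ?_, ?_⟩
      · rw [Finset.card_erase_of_mem hb₀, hcards]
        omega
      · intro b hb hadj
        exact (Finset.mem_erase.mp hb).1
          (hcov.matching adj_join_inr_inl w₀ hw₀ b (Finset.mem_of_mem_erase hb) b₀ hb₀ hadj hb₀adj)
    · push_neg at h
      refine ⟨(L (Sum.inl u)).erase hneu.choose, Finset.erase_subset _ _, ?_, ?_⟩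
      · rw [Finset.card_erase_of_mem hneu.choose_spec, hcards]
        omega
      · intro b hb hadj
        exact h b (Finset.mem_of_mem_erase hb) hadj
  choose K hKsub hKcard hKadj using hK
  -- restricted cover
  have hKdisj : ∀ u v : V, u ≠ v → Disjoint (K u) (K v) := by
    intro u v hne
    exact Finset.disjoint_of_subset_left (hKsub u) (Finset.disjoint_of_subset_right (hKsub v)
      (hcov.listDisjoint (fun h => hne (Sum.inl_injective h))))
  haveI : DecidablePred fun w : W => ∃ u : V, w ∈ K u := Classical.decPred _
  have hcov₁ := restricted_dpcover G H K hKdisj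
    (fun v a ha b hb hne => hcov.cliques (Sum.inl v) a (hKsub v ha) b (hKsub v hb) hne)
    (fun u v huv a ha b hb b' hb' h1 h2 =>
      hcov.matching (adj_join_inl_inl.mpr huv) a (hKsub u ha) b (hKsub v hb) b' (hKsub v hb') h1 h2)
    (fun u v hne hnadj a ha b hb =>
      hcov.nonadj (fun h => hne (Sum.inl_injective h)) hnadj a (hKsub u ha) b (hKsub v hb))
  have hcards₁ : ∀ u : V, ((K u).subtype fun w => ∃ u : V, w ∈ K u).card = chiDP G := by
    intro u
    rw [card_subtype_eq (fun w hw => ⟨u, hw⟩), hKcard]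
  obtain ⟨S₁, hS₁indep, hS₁card⟩ := chiDP_mem G _ inferInstance _ _ hcov₁ hcards₁
  -- lift to W and add w₀
  have hmemL : ∀ x ∈ S₁, ∃ u : V, (x : W) ∈ L (Sum.inl u) := by
    intro x hx
    obtain ⟨u, hu⟩ := x.2
    exact ⟨u, hKsub u hu⟩
  have hw₀ne : ∀ x ∈ S₁, w₀ ≠ (x : W) := by
    intro x hx heq
    obtain ⟨u, hu⟩ := hmemL x hx
    obtain ⟨y, -, hy⟩ := hcov.partition (x : W)
    have h1 := hy (Sum.inl u) hu
    have h2 := hy (Sum.inr 0) (heq ▸ hw₀)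
    rw [← h1] at h2
    simp at h2
  refine ⟨insert w₀ (S₁.image Subtype.val), ?_, ?_⟩
  · intro a ha b hb
    rcases Finset.mem_insert.mp ha with ha | ha <;>
      rcases Finset.mem_insert.mp hb with hb | hb
    · rw [ha, hb]; exact H.irrefl
    · rw [ha]
      obtain ⟨x, hx, rfl⟩ := Finset.mem_image.mp hb
      obtain ⟨u, hu⟩ := x.2
      exact hKadj u _ hu
    · rw [hb]
      obtain ⟨x, hx, rfl⟩ := Finset.mem_image.mp ha
      obtain ⟨u, hu⟩ := x.2
      exact fun hadj => hKadj u _ hu (H.adj_symm hadj)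
    · obtain ⟨x, hx, rfl⟩ := Finset.mem_image.mp ha
      obtain ⟨y, hy, rfl⟩ := Finset.mem_image.mp hb
      exact hS₁indep x hx y hy
  · have hw₀nm : w₀ ∉ S₁.image Subtype.val := by
      intro h
      obtain ⟨x, hx, hxe⟩ := Finset.mem_image.mp h
      exact hw₀ne x hx hxe.symm
    rw [Finset.card_insert_of_notMem hw₀nm,
      Finset.card_image_of_injective S₁ Subtype.val_injective, hS₁card]
    simp [Fintype.card_sum]
/-- If `G` is partially DP-nice and `χ_DP(G ∨ K₁) > χ_DP(G)`, then `G ∨ K₁` is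
partially DP-nice. -/
theorem partiallyDPNice_joinOne {V : Type} [Fintype V] (G : SimpleGraph V)
    (hnice : PartiallyDPNice G)
    (hchi : chiDP G < chiDP (joinComplete G 1)) :
    PartiallyDPNice (joinComplete G 1) := by
  classical
  intro t ht1 ht2
  have hjoin : chiDP (joinComplete G 1) = chiDP G + 1 :=
    le_antisymm (chiDP_join_le G) hchi
  have hn1 : Fintype.card (V ⊕ Fin 1) = Fintype.card V + 1 := by simp
  have hmem : alphaDP (joinComplete G 1) t ∈
      {n : ℕ | ∃ (W : Type) (_ : Fintype W) (H : SimpleGraph W)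
        (L : (V ⊕ Fin 1) → Finset W), DPCover (joinComplete G 1) H L ∧
        (∀ v, (L v).card = t) ∧ _root_.indepNum H = n} :=
    Nat.sInf_mem (alphaSet_nonempty (joinComplete G 1) t)
  obtain ⟨W, instW, H, L, hcov, hcards, hind⟩ := hmem
  haveI := instW
  rcases le_or_gt t (chiDP G) with hle | hgt
  · -- restrict the cover to G
    set K : V → Finset W := fun u => L (Sum.inl u) with hKdef
    have hKdisj : ∀ u v : V, u ≠ v → Disjoint (K u) (K v) := fun u v hne =>
      hcov.listDisjoint (fun h => hne (Sum.inl_injective h))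
    haveI : DecidablePred fun w : W => ∃ u : V, w ∈ K u := Classical.decPred _
    have hcov₁ := restricted_dpcover G H K hKdisj
      (fun v a ha b hb hne => hcov.cliques (Sum.inl v) a ha b hb hne)
      (fun u v huv a ha b hb b' hb' h1 h2 =>
        hcov.matching (adj_join_inl_inl.mpr huv) a ha b hb b' hb' h1 h2)
      (fun u v hne hnadj a ha b hb =>
        hcov.nonadj (fun h => hne (Sum.inl_injective h)) hnadj a ha b hb)
    have hcards₁ : ∀ u : V, ((K u).subtype fun w => ∃ u : V, w ∈ K u).card = t := by
      intro u
      rw [card_subtype_eq (fun w hw => ⟨u, hw⟩), hKdef]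
      exact hcards (Sum.inl u)
    have h1 : alphaDP G t ≤ _root_.indepNum (H.comap
        (Subtype.val : {w : W // ∃ u : V, w ∈ K u} → W)) :=
      Nat.sInf_le ⟨{w : W // ∃ u : V, w ∈ K u}, inferInstance, H.comap Subtype.val,
        fun u => (K u).subtype fun w => ∃ u : V, w ∈ K u, hcov₁, hcards₁, rfl⟩
    have h2 : _root_.indepNum (H.comap (Subtype.val : {w : W // ∃ u : V, w ∈ K u} → W))
        ≤ _root_.indepNum H := indepNum_comap_le H _
    have h3 := hnice t ht1 hle
    have halpha : alphaDP G t ≤ alphaDP (joinComplete G 1) t := hind ▸ (h1.trans h2)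
    have hχpos : 0 < chiDP G := lt_of_lt_of_le ht1 hle
    have hχn : chiDP G ≤ Fintype.card V := chiDP_le_card G
    have key : (↑t * ↑(Fintype.card (V ⊕ Fin 1)) : ℚ) / (chiDP (joinComplete G 1) : ℚ)
        ≤ (↑t * ↑(Fintype.card V) : ℚ) / (chiDP G : ℚ) := by
      rw [hjoin, hn1, div_le_div_iff₀ (by positivity) (by exact_mod_cast hχpos)]
      have c1 : (chiDP G : ℚ) ≤ (Fintype.card V : ℚ) := by exact_mod_cast hχn
      have c2 : (0 : ℚ) ≤ (t : ℚ) := by positivity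
      push_cast
      nlinarith
    refine key.trans (h3.trans ?_)
    exact_mod_cast halpha
  · -- here t = chiDP G + 1 = chiDP (G ∨ K₁)
    have ht' : t = chiDP (joinComplete G 1) := by omega
    obtain ⟨S, hS, hScard⟩ := chiDP_mem (joinComplete G 1) W instW H L hcov
      (fun v => (hcards v).trans ht')
    have hge : Fintype.card (V ⊕ Fin 1) ≤ _root_.indepNum H := hScard ▸ le_indepNum H hS
    have hχ'pos : (0 : ℚ) < (chiDP (joinComplete G 1) : ℚ) := by
      rw [hjoin]; exact_mod_cast Nat.succ_pos _
    have htq : (t : ℚ) = (chiDP (joinComplete G 1) : ℚ) := by exact_mod_cast ht'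
    rw [htq, mul_comm, mul_div_assoc, div_self (ne_of_gt hχ'pos), mul_one, ← hind]
    exact_mod_cast hge
end

section
/- Let Q₃ be the cube graph: the graph whose vertices are the binary strings of length 3 (equivalently, elements of {0,1}³), with two vertices adjacent if and only if they differ in exactly one coordinate. Then χ_DP(Q₃) = 3, α₂^{DP}(Q₃) = 5, and Q₃ is not partially DP-nice (since 5 < 2·8/3). -/
open SimpleGraph

/-- The cube graph `Q₃`: vertices are binary strings of length 3, adjacent iff they
differ in exactly one coordinate. -/
def cubeGraph : SimpleGraph (Fin 3 → Bool) where
  Adj x y := ∃! i : Fin 3, x i ≠ y i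
  symm := by
    constructor
    rintro x y ⟨i, hi, hu⟩
    exact ⟨i, hi.symm, fun j hj => hu j hj.symm⟩
  loopless := by
    constructor
    rintro x ⟨i, hi, _⟩
    exact hi rfl


/-! ### Auxiliary machinery -/

instance : DecidableRel cubeGraph.Adj := fun x y =>
  inferInstanceAs (Decidable (∃ i : Fin 3, (x i ≠ y i) ∧ ∀ j, x j ≠ y j → j = i))

def q3 (a b c : Bool) : Fin 3 → Bool := ![a, b, c]

section Generic
variable {W : Type} {H : SimpleGraph W} {L : (Fin 3 → Bool) → Finset W}

lemma cover_ne (C : DPCover cubeGraph H L) {u v : Fin 3 → Bool} {a b : W}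
    (ha : a ∈ L u) (hb : b ∈ L v) (huv : u ≠ v) : a ≠ b := by
  rintro rfl
  exact huv ((C.partition a).unique ha hb)

lemma nonadj' (C : DPCover cubeGraph H L) {u v : Fin 3 → Bool} {a b : W}
    (ha : a ∈ L u) (hb : b ∈ L v) (h1 : u ≠ v) (h2 : ¬ cubeGraph.Adj u v) :
    ¬ H.Adj a b := C.nonadj h1 h2 a ha b hb

lemma pick (v : Fin 3 → Bool) (P Q : W → Prop)
    (hP : ∀ b ∈ L v, ∀ b' ∈ L v, P b → P b' → b = b')
    (hQ : ∀ b ∈ L v, ∀ b' ∈ L v, Q b → Q b' → b = b')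
    (hc : 2 < (L v).card) : ∃ b ∈ L v, ¬ P b ∧ ¬ Q b := by
  classical
  set F := (L v).filter P ∪ (L v).filter Q with hF
  have h1 : ((L v).filter P).card ≤ 1 := Finset.card_le_one.mpr (by
    intro a ha b hb
    rw [Finset.mem_filter] at ha hb
    exact hP a ha.1 b hb.1 ha.2 hb.2)
  have h2 : ((L v).filter Q).card ≤ 1 := Finset.card_le_one.mpr (by
    intro a ha b hb
    rw [Finset.mem_filter] at ha hb
    exact hQ a ha.1 b hb.1 ha.2 hb.2)
  have hFc : F.card ≤ 2 := le_trans (Finset.card_union_le _ _) (by omega)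
  have hns : ¬ (L v ⊆ F) := fun hs => absurd (Finset.card_le_card hs) (by omega)
  obtain ⟨b, hb, hbF⟩ := Finset.not_subset.mp hns
  refine ⟨b, hb, ?_, ?_⟩
  · exact fun hPb => hbF (Finset.mem_union_left _ (Finset.mem_filter.mpr ⟨hb, hPb⟩))
  · exact fun hQb => hbF (Finset.mem_union_right _ (Finset.mem_filter.mpr ⟨hb, hQb⟩))

lemma pick1 (v : Fin 3 → Bool) (P : W → Prop)
    (hP : ∀ b ∈ L v, ∀ b' ∈ L v, P b → P b' → b = b')
    (hc : 1 < (L v).card) : ∃ b ∈ L v, ¬ P b := by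
  classical
  have h1 : ((L v).filter P).card ≤ 1 := Finset.card_le_one.mpr (by
    intro a ha b hb
    rw [Finset.mem_filter] at ha hb
    exact hP a ha.1 b hb.1 ha.2 hb.2)
  have hns : ¬ (L v ⊆ (L v).filter P) := fun hs => absurd (Finset.card_le_card hs) (by omega)
  obtain ⟨b, hb, hbF⟩ := Finset.not_subset.mp hns
  exact ⟨b, hb, fun hPb => hbF (Finset.mem_filter.mpr ⟨hb, hPb⟩)⟩

lemma coord (C : DPCover cubeGraph H L) (h3 : ∀ v, (L v).card = 3) :
    ∃ x1 ∈ L (q3 true false false), ∃ x2 ∈ L (q3 false true false),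
      ∀ b ∈ L (q3 false false false), ∀ b' ∈ L (q3 false false false),
        (H.Adj x1 b ∨ H.Adj x2 b) → (H.Adj x1 b' ∨ H.Adj x2 b') → b = b' := by
  classical
  have hne : ∀ v, (L v).Nonempty := fun v => Finset.card_pos.mp (by rw [h3]; omega)
  have adjA : cubeGraph.Adj (q3 true false false) (q3 false false false) := by decide
  have adjB : cubeGraph.Adj (q3 false true false) (q3 false false false) := by decide
  have adjBA : cubeGraph.Adj (q3 false false false) (q3 false true false) := by decide
  by_cases hA : ∃ x ∈ L (q3 true false false), ∀ b ∈ L (q3 false false false), ¬ H.Adj x b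
  · obtain ⟨x1, hx1, hx1n⟩ := hA
    obtain ⟨x2, hx2⟩ := hne (q3 false true false)
    refine ⟨x1, hx1, x2, hx2, ?_⟩
    intro b hb b' hb' h h'
    rcases h with h | h
    · exact absurd h (hx1n b hb)
    rcases h' with h' | h'
    · exact absurd h' (hx1n b' hb')
    exact C.matching adjB x2 hx2 b hb b' hb' h h'
  by_cases hB : ∃ y ∈ L (q3 false true false), ∀ b ∈ L (q3 false false false), ¬ H.Adj y b
  · obtain ⟨x2, hx2, hx2n⟩ := hB
    obtain ⟨x1, hx1⟩ := hne (q3 true false false)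
    refine ⟨x1, hx1, x2, hx2, ?_⟩
    intro b hb b' hb' h h'
    rcases h with h | h
    swap
    · exact absurd h (hx2n b hb)
    rcases h' with h' | h'
    swap
    · exact absurd h' (hx2n b' hb')
    exact C.matching adjA x1 hx1 b hb b' hb' h h'
  push_neg at hA hB
  obtain ⟨x1, hx1⟩ := hne (q3 true false false)
  obtain ⟨z, hz, hadj1z⟩ := hA x1 hx1
  have hx2ex : ∃ y ∈ L (q3 false true false), H.Adj y z := by
    by_contra hno
    push_neg at hno
    set f : W → W := fun y => if h : y ∈ L (q3 false true false) then (hB y h).choose else y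
      with hf
    have hspec : ∀ y (h : y ∈ L (q3 false true false)),
        f y ∈ L (q3 false false false) ∧ H.Adj y (f y) := by
      intro y h
      simp only [hf, dif_pos h]
      exact ⟨(hB y h).choose_spec.1, (hB y h).choose_spec.2⟩
    have hmaps : ∀ y ∈ L (q3 false true false),
        f y ∈ (L (q3 false false false)).erase z := by
      intro y hy
      exact Finset.mem_erase.mpr
        ⟨fun he => hno y hy (by rw [← he]; exact (hspec y hy).2), (hspec y hy).1⟩
    have hcard := Finset.card_le_card_of_injOn f hmaps
      (fun y hy y' hy' heq =>
        C.matching adjBA (f y) (hspec y hy).1 y hy y' hy'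
          ((hspec y hy).2).symm (by rw [heq]; exact ((hspec y' hy').2).symm))
    rw [Finset.card_erase_of_mem hz, h3, h3] at hcard
    omega
  obtain ⟨x2, hx2, hadj2z⟩ := hx2ex
  refine ⟨x1, hx1, x2, hx2, ?_⟩
  have hbz : ∀ bb ∈ L (q3 false false false), (H.Adj x1 bb ∨ H.Adj x2 bb) → bb = z := by
    intro bb hbb hh
    rcases hh with hh | hh
    · exact C.matching adjA x1 hx1 bb hbb z hz hh hadj1z
    · exact C.matching adjB x2 hx2 bb hbb z hz hh hadj2z
  intro b hb b' hb' h h'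
  rw [hbz b hb h, hbz b' hb' h']

lemma brooks (C : DPCover cubeGraph H L) (h3 : ∀ v, (L v).card = 3) :
    ∃ S : Finset W, IsIndepFinset H S ∧ S.card = 8 := by
  classical
  obtain ⟨x1, hm1, x2, hm2, h12⟩ := coord C h3
  have hcd : ∀ v, 2 < (L v).card := fun v => by rw [h3]; omega
  obtain ⟨x3, hm3, h13, h23⟩ := pick (L := L) (q3 true true false)
    (fun b => H.Adj x1 b) (fun b => H.Adj x2 b)
    (C.matching (by decide : cubeGraph.Adj (q3 true false false) (q3 true true false)) x1 hm1)
    (C.matching (by decide : cubeGraph.Adj (q3 false true false) (q3 true true false)) x2 hm2)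
    (hcd _)
  obtain ⟨x4, hm4, h34⟩ := pick1 (L := L) (q3 true true true)
    (fun b => H.Adj x3 b)
    (C.matching (by decide : cubeGraph.Adj (q3 true true false) (q3 true true true)) x3 hm3)
    (by have := hcd (q3 true true true); omega)
  obtain ⟨x5, hm5, h15, h45⟩ := pick (L := L) (q3 true false true)
    (fun b => H.Adj x1 b) (fun b => H.Adj x4 b)
    (C.matching (by decide : cubeGraph.Adj (q3 true false false) (q3 true false true)) x1 hm1)
    (C.matching (by decide : cubeGraph.Adj (q3 true true true) (q3 true false true)) x4 hm4)
    (hcd _)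
  obtain ⟨x6, hm6, h26, h46⟩ := pick (L := L) (q3 false true true)
    (fun b => H.Adj x2 b) (fun b => H.Adj x4 b)
    (C.matching (by decide : cubeGraph.Adj (q3 false true false) (q3 false true true)) x2 hm2)
    (C.matching (by decide : cubeGraph.Adj (q3 true true true) (q3 false true true)) x4 hm4)
    (hcd _)
  obtain ⟨x7, hm7, h57, h67⟩ := pick (L := L) (q3 false false true)
    (fun b => H.Adj x5 b) (fun b => H.Adj x6 b)
    (C.matching (by decide : cubeGraph.Adj (q3 true false true) (q3 false false true)) x5 hm5)
    (C.matching (by decide : cubeGraph.Adj (q3 false true true) (q3 false false true)) x6 hm6)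
    (hcd _)
  obtain ⟨x8, hm8, h128, h78⟩ := pick (L := L) (q3 false false false)
    (fun b => H.Adj x1 b ∨ H.Adj x2 b) (fun b => H.Adj x7 b)
    h12
    (C.matching (by decide : cubeGraph.Adj (q3 false false true) (q3 false false false)) x7 hm7)
    (hcd _)
  have h18 : ¬ H.Adj x1 x8 := fun h => h128 (Or.inl h)
  have h28 : ¬ H.Adj x2 x8 := fun h => h128 (Or.inr h)
  have hnodup : ([x1, x2, x3, x4, x5, x6, x7, x8] : List W).Nodup := by
    simp only [List.nodup_cons, List.mem_cons, List.not_mem_nil, or_false, List.nodup_nil,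
      not_or, not_false_eq_true, and_true]
    refine ⟨⟨?_, ?_, ?_, ?_, ?_, ?_, ?_⟩, ⟨?_, ?_, ?_, ?_, ?_, ?_⟩, ⟨?_, ?_, ?_, ?_, ?_⟩,
      ⟨?_, ?_, ?_, ?_⟩, ⟨?_, ?_, ?_⟩, ⟨?_, ?_⟩, ?_⟩ <;>
    first
      | exact cover_ne C hm1 hm2 (by decide) | exact cover_ne C hm1 hm3 (by decide)
      | exact cover_ne C hm1 hm4 (by decide) | exact cover_ne C hm1 hm5 (by decide)
      | exact cover_ne C hm1 hm6 (by decide) | exact cover_ne C hm1 hm7 (by decide)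
      | exact cover_ne C hm1 hm8 (by decide) | exact cover_ne C hm2 hm3 (by decide)
      | exact cover_ne C hm2 hm4 (by decide) | exact cover_ne C hm2 hm5 (by decide)
      | exact cover_ne C hm2 hm6 (by decide) | exact cover_ne C hm2 hm7 (by decide)
      | exact cover_ne C hm2 hm8 (by decide) | exact cover_ne C hm3 hm4 (by decide)
      | exact cover_ne C hm3 hm5 (by decide) | exact cover_ne C hm3 hm6 (by decide)
      | exact cover_ne C hm3 hm7 (by decide) | exact cover_ne C hm3 hm8 (by decide)
      | exact cover_ne C hm4 hm5 (by decide) | exact cover_ne C hm4 hm6 (by decide)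
      | exact cover_ne C hm4 hm7 (by decide) | exact cover_ne C hm4 hm8 (by decide)
      | exact cover_ne C hm5 hm6 (by decide) | exact cover_ne C hm5 hm7 (by decide)
      | exact cover_ne C hm5 hm8 (by decide) | exact cover_ne C hm6 hm7 (by decide)
      | exact cover_ne C hm6 hm8 (by decide) | exact cover_ne C hm7 hm8 (by decide)
  refine ⟨([x1, x2, x3, x4, x5, x6, x7, x8] : List W).toFinset, ?_, ?_⟩
  · intro a ha b hb
    simp only [List.mem_toFinset, List.mem_cons, List.not_mem_nil, or_false] at ha hb
    rcases ha with rfl | rfl | rfl | rfl | rfl | rfl | rfl | rfl <;>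
      rcases hb with rfl | rfl | rfl | rfl | rfl | rfl | rfl | rfl <;>
      first
        | exact H.irrefl
        | assumption
        | exact fun h => h13 h.symm | exact fun h => h23 h.symm
        | exact fun h => h34 h.symm | exact fun h => h15 h.symm
        | exact fun h => h45 h.symm | exact fun h => h26 h.symm
        | exact fun h => h46 h.symm | exact fun h => h57 h.symm
        | exact fun h => h67 h.symm | exact fun h => h18 h.symm
        | exact fun h => h28 h.symm | exact fun h => h78 h.symm
        | exact nonadj' C (by assumption) (by assumption) (by decide) (by decide)
  · rw [List.card_toFinset, List.dedup_eq_self.mpr hnodup]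
    rfl

lemma exists_indep5 (C : DPCover cubeGraph H L) (h2 : ∀ v, 1 < (L v).card) :
    ∃ S : Finset W, IsIndepFinset H S ∧ S.card = 5 := by
  classical
  have hne : ∀ v, (L v).Nonempty := fun v => Finset.card_pos.mp (by have := h2 v; omega)
  obtain ⟨p, hp⟩ := hne (q3 true true true)
  obtain ⟨y1, hy1, hp1⟩ := pick1 (L := L) (q3 true true false) (fun b => H.Adj p b)
    (C.matching (by decide : cubeGraph.Adj (q3 true true true) (q3 true true false)) p hp)
    (h2 _)
  obtain ⟨y2, hy2, hp2⟩ := pick1 (L := L) (q3 true false true) (fun b => H.Adj p b)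
    (C.matching (by decide : cubeGraph.Adj (q3 true true true) (q3 true false true)) p hp)
    (h2 _)
  obtain ⟨y3, hy3, hp3⟩ := pick1 (L := L) (q3 false true true) (fun b => H.Adj p b)
    (C.matching (by decide : cubeGraph.Adj (q3 true true true) (q3 false true true)) p hp)
    (h2 _)
  obtain ⟨y4, hy4⟩ := hne (q3 false false false)
  have hnodup : ([p, y1, y2, y3, y4] : List W).Nodup := by
    simp only [List.nodup_cons, List.mem_cons, List.not_mem_nil, or_false, List.nodup_nil,
      not_or, not_false_eq_true, and_true]
    refine ⟨⟨?_, ?_, ?_, ?_⟩, ⟨?_, ?_, ?_⟩, ⟨?_, ?_⟩, ?_⟩ <;>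
    first
      | exact cover_ne C hp hy1 (by decide) | exact cover_ne C hp hy2 (by decide)
      | exact cover_ne C hp hy3 (by decide) | exact cover_ne C hp hy4 (by decide)
      | exact cover_ne C hy1 hy2 (by decide) | exact cover_ne C hy1 hy3 (by decide)
      | exact cover_ne C hy1 hy4 (by decide) | exact cover_ne C hy2 hy3 (by decide)
      | exact cover_ne C hy2 hy4 (by decide) | exact cover_ne C hy3 hy4 (by decide)
  refine ⟨([p, y1, y2, y3, y4] : List W).toFinset, ?_, ?_⟩
  · intro a ha b hb
    simp only [List.mem_toFinset, List.mem_cons, List.not_mem_nil, or_false] at ha hb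
    rcases ha with rfl | rfl | rfl | rfl | rfl <;>
      rcases hb with rfl | rfl | rfl | rfl | rfl <;>
      first
        | exact H.irrefl
        | assumption
        | exact fun h => hp1 h.symm | exact fun h => hp2 h.symm
        | exact fun h => hp3 h.symm
        | exact nonadj' C (by assumption) (by assumption) (by decide) (by decide)
  · rw [List.card_toFinset, List.dedup_eq_self.mpr hnodup]
    rfl

end Generic

/-! ### A bad 2-fold cover of the cube -/

def sgnB (x y : Nat) : Bool :=
  (x+y == 2 && x*y == 0) || (x+y == 4 && x*y == 3) ||
  (x+y == 5 && x*y == 6) || (x+y == 9 && x*y == 20)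

def badE (m u v : Nat) : Bool :=
  ((u ^^^ v) == 1 || (u ^^^ v) == 2 || (u ^^^ v) == 4) &&
  ((m.testBit u == m.testBit v) == sgnB u v)

def checkC (w1 w2 m : Nat) : Bool :=
  (List.range 8).any fun u => (List.range 8).any fun v =>
    u != w1 && u != w2 && v != w1 && v != w2 && badE m u v

def checkAll : Bool :=
  (List.range 64).all fun w => (List.range 256).all fun m => checkC (w % 8) (w / 8) m

set_option maxRecDepth 100000 in
set_option maxHeartbeats 1000000 in
lemma keyB : checkAll = true := by decide

lemma checkC_true (w1 w2 m : Nat) (h1 : w1 < 8) (h2 : w2 < 8) (h3 : m < 256) :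
    checkC w1 w2 m = true := by
  have h := List.all_eq_true.mp keyB (w1 + 8*w2) (List.mem_range.mpr (by omega))
  have h' := List.all_eq_true.mp h m (List.mem_range.mpr h3)
  have e1 : (w1 + 8*w2) % 8 = w1 := by omega
  have e2 : (w1 + 8*w2) / 8 = w2 := by omega
  rwa [e1, e2] at h'

lemma checkC_spec {w1 w2 m : Nat} (h : checkC w1 w2 m = true) :
    ∃ u v, u < 8 ∧ v < 8 ∧ u ≠ w1 ∧ u ≠ w2 ∧ v ≠ w1 ∧ v ≠ w2 ∧ badE m u v = true := by
  simp only [checkC, List.any_eq_true, List.mem_range, Bool.and_eq_true, bne_iff_ne] at h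
  obtain ⟨u, hu, v, hv, ⟨⟨⟨h1, h2⟩, h3⟩, h4⟩, hb⟩ := h
  exact ⟨u, v, hu, hv, h1, h2, h3, h4, hb⟩

def codeF (v : Fin 3 → Bool) : Nat :=
  (cond (v 0) 1 0) + 2 * (cond (v 1) 1 0) + 4 * (cond (v 2) 1 0)

def decF : Fin 8 → (Fin 3 → Bool) :=
  ![q3 false false false, q3 true false false, q3 false true false, q3 true true false,
    q3 false false true, q3 true false true, q3 false true true, q3 true true true]

lemma code_dec : ∀ k : Fin 8, codeF (decF k) = k.val := by decide
lemma code_lt : ∀ v, codeF v < 8 := by decide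
lemma adj_of_xor : ∀ a b : Fin 8,
    ((a.val ^^^ b.val) = 1 ∨ (a.val ^^^ b.val) = 2 ∨ (a.val ^^^ b.val) = 4) →
    cubeGraph.Adj (decF a) (decF b) := by decide

lemma natBits : ∀ (t0 t1 t2 t3 t4 t5 t6 t7 : Bool) (j : Fin 8),
    ((cond t0 1 0) + 2*(cond t1 1 0) + 4*(cond t2 1 0) + 8*(cond t3 1 0) + 16*(cond t4 1 0)
      + 32*(cond t5 1 0) + 64*(cond t6 1 0) + 128*(cond t7 1 0) : Nat).testBit j.val
      = [t0,t1,t2,t3,t4,t5,t6,t7].get j := by decide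

lemma natBitsLt : ∀ (t0 t1 t2 t3 t4 t5 t6 t7 : Bool),
    ((cond t0 1 0) + 2*(cond t1 1 0) + 4*(cond t2 1 0) + 8*(cond t3 1 0) + 16*(cond t4 1 0)
      + 32*(cond t5 1 0) + 64*(cond t6 1 0) + 128*(cond t7 1 0) : Nat) < 256 := by decide

def Hc : SimpleGraph ((Fin 3 → Bool) × Bool) where
  Adj a b := (a.1 = b.1 ∧ a.2 ≠ b.2) ∨
    (cubeGraph.Adj a.1 b.1 ∧ ((a.2 = b.2) ↔ sgnB (codeF a.1) (codeF b.1) = true))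
  symm := by
    have hs : ∀ x y : Nat, sgnB x y = sgnB y x := by
      intro x y
      simp only [sgnB, Nat.add_comm x y, Nat.mul_comm x y]
    constructor
    rintro a b (⟨h1, h2⟩ | ⟨h1, h2⟩)
    · exact Or.inl ⟨h1.symm, h2.symm⟩
    · refine Or.inr ⟨h1.symm, ?_⟩
      rw [hs, eq_comm]
      exact h2
  loopless := by
    constructor
    rintro a (⟨-, h2⟩ | ⟨h1, -⟩)
    · exact h2 rfl
    · exact cubeGraph.loopless.irrefl _ h1

instance : DecidableRel Hc.Adj := fun a b =>
  inferInstanceAs (Decidable ((a.1 = b.1 ∧ a.2 ≠ b.2) ∨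
    (cubeGraph.Adj a.1 b.1 ∧ ((a.2 = b.2) ↔ sgnB (codeF a.1) (codeF b.1) = true))))

lemma smallSet (s : Finset (Fin 3 → Bool)) (h : s.card ≤ 2) :
    ∃ a b, s ⊆ {a, b} := by
  rcases s.eq_empty_or_nonempty with rfl | ⟨a, ha⟩
  · exact ⟨default, default, by simp⟩
  rcases (s.erase a).eq_empty_or_nonempty with he | ⟨b, hb⟩
  · refine ⟨a, a, fun x hx => ?_⟩
    have : x = a := by
      by_contra hxa
      have : x ∈ s.erase a := Finset.mem_erase.mpr ⟨hxa, hx⟩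
      rw [he] at this
      exact absurd this (Finset.notMem_empty x)
    simp [this]
  · refine ⟨a, b, fun x hx => ?_⟩
    have h0 : ((s.erase a).erase b).card = 0 := by
      have e1 := Finset.card_erase_of_mem ha
      have e2 := Finset.card_erase_of_mem hb
      omega
    have h2 := Finset.card_eq_zero.mp h0
    simp only [Finset.mem_insert, Finset.mem_singleton]
    by_contra hcon
    push_neg at hcon
    have : x ∈ (s.erase a).erase b :=
      Finset.mem_erase.mpr ⟨hcon.2, Finset.mem_erase.mpr ⟨hcon.1, hx⟩⟩
    rw [h2] at this
    exact absurd this (Finset.notMem_empty x)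

lemma card_le_five (S : Finset ((Fin 3 → Bool) × Bool)) (hS : IsIndepFinset Hc S) :
    S.card ≤ 5 := by
  classical
  by_contra hlt
  push_neg at hlt
  have hinj : Set.InjOn (Prod.fst : (Fin 3 → Bool) × Bool → Fin 3 → Bool) ↑S := by
    intro a ha b hb h1
    have h2 : a.2 = b.2 := by
      by_contra h2
      exact hS a ha b hb (Or.inl ⟨h1, h2⟩)
    exact Prod.ext h1 h2
  set A := S.image Prod.fst with hA
  have hcA : 6 ≤ A.card := by
    rw [hA, Finset.card_image_of_injOn hinj]
    omega
  have hcardV : Fintype.card (Fin 3 → Bool) = 8 := by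
    simp [Fintype.card_fun]
  have hcompl : (Finset.univ \ A).card ≤ 2 := by
    have := Finset.card_sdiff_of_subset (Finset.subset_univ A)
    have := Finset.card_le_univ A
    rw [Finset.card_univ, hcardV] at *
    omega
  obtain ⟨w1, w2, hsub⟩ := smallSet _ hcompl
  set c : (Fin 3 → Bool) → Bool := fun v => decide ((v, true) ∈ S) with hc
  have hcS : ∀ v ∈ A, (v, c v) ∈ S := by
    intro v hv
    obtain ⟨a, ha, rfl⟩ := Finset.mem_image.mp hv
    by_cases ht : (a.1, true) ∈ S
    · have : c a.1 = true := by simp [hc, ht]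
      rw [this]
      exact ht
    · have hcf : c a.1 = false := by simp [hc, ht]
      have h2 : a.2 = false := by
        cases h2 : a.2
        · rfl
        · exact absurd (by rw [← h2]; exact ha) ht
      rw [hcf]
      rw [← h2]
      exact ha
  set m : Nat := (cond (c (decF 0)) 1 0) + 2*(cond (c (decF 1)) 1 0) + 4*(cond (c (decF 2)) 1 0)
    + 8*(cond (c (decF 3)) 1 0) + 16*(cond (c (decF 4)) 1 0) + 32*(cond (c (decF 5)) 1 0)
    + 64*(cond (c (decF 6)) 1 0) + 128*(cond (c (decF 7)) 1 0) with hm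
  have hmbit : ∀ j : Fin 8, m.testBit j.val = c (decF j) := by
    intro j
    rw [hm, natBits]
    fin_cases j <;> rfl
  have hmlt : m < 256 := natBitsLt _ _ _ _ _ _ _ _
  obtain ⟨u, v, hu8, hv8, hu1, hu2, hv1, hv2, hbad⟩ :=
    checkC_spec (checkC_true (codeF w1) (codeF w2) m (code_lt w1) (code_lt w2) hmlt)
  simp only [badE, Bool.and_eq_true, Bool.or_eq_true, beq_iff_eq] at hbad
  obtain ⟨hxor, hsgn⟩ := hbad
  set U := decF ⟨u, hu8⟩ with hU
  set Vv := decF ⟨v, hv8⟩ with hVv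
  have hcodeU : codeF U = u := code_dec ⟨u, hu8⟩
  have hcodeV : codeF Vv = v := code_dec ⟨v, hv8⟩
  have hmemA : ∀ (x : Fin 3 → Bool), x ≠ w1 → x ≠ w2 → x ∈ A := by
    intro x h1 h2
    by_contra hxA
    have : x ∈ Finset.univ \ A := Finset.mem_sdiff.mpr ⟨Finset.mem_univ x, hxA⟩
    have := hsub this
    simp only [Finset.mem_insert, Finset.mem_singleton] at this
    tauto
  have hUA : U ∈ A :=
    hmemA U (fun h => hu1 (by rw [← hcodeU, h])) (fun h => hu2 (by rw [← hcodeU, h]))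
  have hVA : Vv ∈ A :=
    hmemA Vv (fun h => hv1 (by rw [← hcodeV, h])) (fun h => hv2 (by rw [← hcodeV, h]))
  have hadj : cubeGraph.Adj U Vv := adj_of_xor ⟨u, hu8⟩ ⟨v, hv8⟩ (by tauto)
  have e1 : c U = m.testBit u := (hmbit ⟨u, hu8⟩).symm
  have e2 : c Vv = m.testBit v := (hmbit ⟨v, hv8⟩).symm
  have hHadj : Hc.Adj (U, c U) (Vv, c Vv) := by
    refine Or.inr ⟨hadj, ?_⟩
    show c U = c Vv ↔ sgnB (codeF U) (codeF Vv) = true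
    rw [hcodeU, hcodeV, ← hsgn, e1, e2]
    exact beq_iff_eq.symm
  exact hS _ (hcS U hUA) _ (hcS Vv hVA) hHadj

def Lc : (Fin 3 → Bool) → Finset ((Fin 3 → Bool) × Bool) := fun v => {(v, false), (v, true)}

lemma Lc_card : ∀ v, (Lc v).card = 2 := by decide

lemma coverC : DPCover cubeGraph Hc Lc := by
  constructor
  · rintro ⟨v, b⟩
    refine ⟨v, ?_, ?_⟩
    · cases b <;> simp [Lc]
    · intro v' hv'
      simp only [Lc, Finset.mem_insert, Finset.mem_singleton, Prod.mk.injEq] at hv'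
      rcases hv' with ⟨h, -⟩ | ⟨h, -⟩ <;> exact h.symm
  · decide
  · have hm : ∀ u v : Fin 3 → Bool, cubeGraph.Adj u v → ∀ a ∈ Lc u, ∀ b ∈ Lc v, ∀ b' ∈ Lc v,
        Hc.Adj a b → Hc.Adj a b' → b = b' := by decide
    exact fun u v h => hm u v h
  · have hn : ∀ u v : Fin 3 → Bool, ∀ a ∈ Lc u, ∀ b ∈ Lc v,
        u = v ∨ cubeGraph.Adj u v ∨ ¬ Hc.Adj a b := by decide
    intro u v h1 h2 a ha b hb
    rcases hn u v a ha b hb with h | h | h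
    · exact absurd h h1
    · exact absurd h h2
    · exact h

lemma indepNum_Hc : _root_.indepNum Hc = 5 := by
  obtain ⟨S5, hS5, hc5⟩ := exists_indep5 coverC (fun v => by rw [Lc_card]; omega)
  apply le_antisymm
  · refine csSup_le ⟨0, ∅, fun a ha => absurd ha (Finset.notMem_empty a), Finset.card_empty⟩ ?_
    rintro n ⟨S, hS, rfl⟩
    exact card_le_five S hS
  · refine le_csSup ⟨Fintype.card ((Fin 3 → Bool) × Bool), ?_⟩ ⟨S5, hS5, hc5⟩
    rintro n ⟨S, -, rfl⟩
    exact Finset.card_le_univ S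

/-! ### Covers of fold 1 and 0 -/

def L1 : (Fin 3 → Bool) → Finset (Fin 3 → Bool) := fun v => {v}

lemma cover1 : DPCover cubeGraph cubeGraph L1 := by
  constructor
  · intro w
    exact ⟨w, Finset.mem_singleton_self w, fun v h => (Finset.mem_singleton.mp h).symm⟩
  · intro v a ha b hb hab
    simp only [L1, Finset.mem_singleton] at ha hb
    exact absurd (ha.trans hb.symm) hab
  · intro u v huv a ha b hb b' hb' h1 h2
    simp only [L1, Finset.mem_singleton] at hb hb'
    rw [hb, hb']
  · intro u v h1 h2 a ha b hb
    simp only [L1, Finset.mem_singleton] at ha hb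
    rw [ha, hb]
    exact h2

def L0 : (Fin 3 → Bool) → Finset Empty := fun _ => ∅

lemma cover0 : DPCover cubeGraph (⊥ : SimpleGraph Empty) L0 := by
  constructor
  · intro w
    exact w.elim
  · intro v a ha
    exact absurd ha (Finset.notMem_empty a)
  · intro u v huv a ha
    exact absurd ha (Finset.notMem_empty a)
  · intro u v h1 h2 a ha
    exact absurd ha (Finset.notMem_empty a)

/-- `χ_DP(Q₃) = 3`, `α₂^{DP}(Q₃) = 5`, and `Q₃` is not partially DP-nice. -/
theorem cubeGraph_not_partiallyDPNice :
    chiDP cubeGraph = 3 ∧ alphaDP cubeGraph 2 = 5 ∧ ¬ PartiallyDPNice cubeGraph := by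
  have hcardV : Fintype.card (Fin 3 → Bool) = 8 := by simp [Fintype.card_fun]
  have hchi : chiDP cubeGraph = 3 := by
    apply le_antisymm
    · refine Nat.sInf_le ?_
      intro W instW H L C hcards
      obtain ⟨S, hS, hSc⟩ := brooks C hcards
      exact ⟨S, hS, by rw [hSc, hcardV]⟩
    · refine le_csInf ⟨3, ?_⟩ ?_
      · intro W instW H L C hcards
        obtain ⟨S, hS, hSc⟩ := brooks C hcards
        exact ⟨S, hS, by rw [hSc, hcardV]⟩
      · intro m hm
        by_contra hlt
        push_neg at hlt
        interval_cases m
        · obtain ⟨S, -, hSc⟩ := hm Empty inferInstance ⊥ L0 cover0 (fun v => rfl)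
          rw [hcardV] at hSc
          have := Finset.card_le_univ S
          have h0 : Fintype.card Empty = 0 := rfl
          omega
        · obtain ⟨S, hS, hSc⟩ := hm (Fin 3 → Bool) inferInstance cubeGraph L1 cover1
            (fun v => Finset.card_singleton v)
          have hSuniv : S = Finset.univ := Finset.eq_univ_of_card S hSc
          refine hS (q3 false false false) ?_ (q3 true false false) ?_ (by decide) <;>
            (rw [hSuniv]; exact Finset.mem_univ _)
        · obtain ⟨S, hS, hSc⟩ := hm ((Fin 3 → Bool) × Bool) inferInstance Hc Lc coverC Lc_card
          have := card_le_five S hS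
          rw [hcardV] at hSc
          omega
  have halpha : alphaDP cubeGraph 2 = 5 := by
    apply le_antisymm
    · exact Nat.sInf_le ⟨(Fin 3 → Bool) × Bool, inferInstance, Hc, Lc, coverC, Lc_card,
        indepNum_Hc⟩
    · refine le_csInf ⟨5, (Fin 3 → Bool) × Bool, inferInstance, Hc, Lc, coverC, Lc_card,
        indepNum_Hc⟩ ?_
      rintro n ⟨W, instW, H, L, C, hcards, rfl⟩
      obtain ⟨S, hS, hSc⟩ := exists_indep5 C (fun v => by rw [hcards]; omega)
      refine le_csSup ⟨Fintype.card W, ?_⟩ ⟨S, hS, hSc⟩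
      rintro n ⟨T, -, rfl⟩
      exact Finset.card_le_univ T
  refine ⟨hchi, halpha, ?_⟩
  intro h
  have h2 := h 2 one_le_two (by rw [hchi]; norm_num)
  rw [hchi, halpha, hcardV] at h2
  norm_num at h2
end
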